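/- arXiv:1805.03331 — 2 statements merged into one kernel-verified Lean document; each statement's English description precedes it below -/
import Mathlib

section
/- Let (L, Q) be a quadratic lattice over 𝔬 with Jordan splitting ⊕_j L_j and let i be an integer with L_i ≠ 0. Let Bⁱ ∈ ℋₙᴺᴰ(𝔬) be any reduced form representing (L ∩ 2^i L♯, 2^{−i}Q), let l and m be the numbers of entries of GK(Bⁱ) equal to 0 and to 1 respectively, and partition Bⁱ into a 3×3 block matrix (Bⁱ_{st})_{0≤s,t≤2} with diagonal block sizes l, m, n−l−m. Then: Bⁱ₀₀ is a reduced form all of whose Gross–Keating entries are 0; Bⁱ₁₁ is a reduced form all of whose Gross–Keating entries are 1; the upper-left (l+m)×(l+m) block [[Bⁱ₀₀, Bⁱ₀₁],[Bⁱ₁₀, Bⁱ₁₁]] is a reduced form whose Gross–Keating entries all lie in {0, 1}; and every entry of GK(Bⁱ₂₂) is at least 2. -/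
open scoped Classical

noncomputable section

namespace GK

variable {F : Type} [Field F]

/-- The axioms making `(F, O, ord)` a nonarchimedean local field of characteristic zero
(i.e. a finite extension of `ℚ_p`): `ord` is a surjective discrete valuation, `O` is its
valuation ring, the residue field is finite of cardinality `q` and of characteristic `p`,
and `O` is complete. -/
structure LocalFieldAxioms (O : Subring F) (ord : F → ℤ) (p q : ℕ) : Prop where
  ord_mul : ∀ x y : F, x ≠ 0 → y ≠ 0 → ord (x * y) = ord x + ord y
  min_le_ord_add : ∀ x y : F, x ≠ 0 → y ≠ 0 → x + y ≠ 0 → min (ord x) (ord y) ≤ ord (x + y)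
  ord_surjective : ∀ k : ℤ, ∃ x : F, x ≠ 0 ∧ ord x = k
  mem_integers : ∀ x : F, x ∈ O ↔ x = 0 ∨ 0 ≤ ord x
  charZero : CharZero F
  p_prime : Nat.Prime p
  ord_p_pos : 0 < ord (p : F)
  residue_card : ∃ S : Finset F, S.card = q ∧ (∀ x ∈ S, x ∈ O) ∧
    (∀ x : F, x ∈ O → ∃ y ∈ S, x - y = 0 ∨ 1 ≤ ord (x - y)) ∧
    ∀ y ∈ S, ∀ z ∈ S, (y - z = 0 ∨ 1 ≤ ord (y - z)) → y = z
  complete : ∀ x : ℕ → F, (∀ k, x k ∈ O) →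
    (∀ k : ℕ, x (k+1) - x k = 0 ∨ (k : ℤ) ≤ ord (x (k+1) - x k)) →
    ∃ L : F, L ∈ O ∧ ∀ k : ℕ, x k - L = 0 ∨ (k : ℤ) ≤ ord (x k - L)

/-- `x` lies in `c • O`. -/
def MemScale (O : Subring F) (c x : F) : Prop := ∃ w, w ∈ O ∧ x = c * w

/-- A half-integral symmetric matrix: symmetric, integral diagonal, and
twice every entry is integral. -/
def HalfIntegral (O : Subring F) {n : ℕ} (B : Matrix (Fin n) (Fin n) F) : Prop :=
  B.IsSymm ∧ (∀ i, B i i ∈ O) ∧ ∀ i j, 2 * B i j ∈ O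

/-- `U ∈ GLₙ(O)`: entries in `O` and determinant a unit of `O`. -/
def IsGLO (O : Subring F) (ord : F → ℤ) {n : ℕ} (U : Matrix (Fin n) (Fin n) F) : Prop :=
  (∀ i j, U i j ∈ O) ∧ U.det ≠ 0 ∧ ord U.det = 0

/-- `GLₙ(O)`-equivalence of matrices: `B' = ᵗU · B · U`. -/
def EquivO (O : Subring F) (ord : F → ℤ) {n : ℕ} (B B' : Matrix (Fin n) (Fin n) F) : Prop :=
  ∃ U : Matrix (Fin n) (Fin n) F, IsGLO O ord U ∧ B' = U.transpose * B * U

/-- `a ∈ S(B)` : a non-decreasing sequence of naturals with `ord (B i i) ≥ a i` and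
`ord (2 B i j) ≥ (a i + a j)/2`. -/
def InS (ord : F → ℤ) {n : ℕ} (B : Matrix (Fin n) (Fin n) F) (a : Fin n → ℕ) : Prop :=
  Monotone a ∧ (∀ i, B i i = 0 ∨ (a i : ℤ) ≤ ord (B i i)) ∧
    ∀ i j, 2 * B i j = 0 ∨ (a i : ℤ) + (a j : ℤ) ≤ 2 * ord (2 * B i j)

/-- The union of the `S(ᵗU·B·U)` over all `U ∈ GLₙ(O)`. -/
def GKSet (O : Subring F) (ord : F → ℤ) {n : ℕ} (B : Matrix (Fin n) (Fin n) F) :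
    Set (Fin n → ℕ) :=
  {a | ∃ B', EquivO O ord B B' ∧ InS ord B' a}

/-- Lexicographic comparison of sequences. -/
def LexLE {n : ℕ} (a b : Fin n → ℕ) : Prop :=
  a = b ∨ ∃ k, (∀ j, j < k → a j = b j) ∧ a k < b k

/-- `a` is the Gross–Keating invariant of `B` : the lexicographically greatest
element of `⋃_U S(ᵗU·B·U)`. -/
def IsGK (O : Subring F) (ord : F → ℤ) {n : ℕ} (B : Matrix (Fin n) (Fin n) F)
    (a : Fin n → ℕ) : Prop :=
  a ∈ GKSet O ord B ∧ ∀ b ∈ GKSet O ord B, LexLE b a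

/-- Orthogonal (block diagonal) sum of two square matrices. -/
def orthSum {m k : ℕ} (A : Matrix (Fin m) (Fin m) F) (B : Matrix (Fin k) (Fin k) F) :
    Matrix (Fin (m + k)) (Fin (m + k)) F :=
  Matrix.reindex finSumFinEquiv finSumFinEquiv (Matrix.fromBlocks A 0 0 B)

/-- The congruence condition `ᵗX·B·X − B ∈ 𝔭^N · ℋₙ(𝔬)` for a matrix `X` with
entries in `O`. -/
def DensCond (O : Subring F) (ord : F → ℤ) {n : ℕ}
    (B X : Matrix (Fin n) (Fin n) F) (N : ℕ) : Prop :=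
  (∀ i j, X i j ∈ O) ∧
  (∀ i, (X.transpose * B * X - B) i i = 0 ∨
      (N : ℤ) ≤ ord ((X.transpose * B * X - B) i i)) ∧
  ∀ i j, 2 * (X.transpose * B * X - B) i j = 0 ∨
      (N : ℤ) ≤ ord (2 * (X.transpose * B * X - B) i j)

/-- The number of solutions `X ∈ Mₙ(𝔬/𝔭^N)` of `ᵗX·B·X ≡ B mod 𝔭^N ℋₙ(𝔬)`,
counted as residue classes mod `𝔭^N` of integral matrix solutions. -/
def densCount (O : Subring F) (ord : F → ℤ) {n : ℕ}
    (B : Matrix (Fin n) (Fin n) F) (N : ℕ) : ℕ :=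
  Nat.card (Quot (fun X Y : {X : Matrix (Fin n) (Fin n) F // DensCond O ord B X N} =>
    ∀ i j, X.1 i j - Y.1 i j = 0 ∨ (N : ℤ) ≤ ord (X.1 i j - Y.1 i j)))

/-- `β` is the local density `β(L)` of the quadratic lattice with Gram matrix `B`:
`β = (1/2)·(q^N)^{-n(n-1)/2} · #{X ∈ Mₙ(𝔬/𝔭^N) : ᵗX·B·X ≡ B}` for all large `N`. -/
def IsLocalDensity (O : Subring F) (ord : F → ℤ) (q : ℕ) {n : ℕ}
    (B : Matrix (Fin n) (Fin n) F) (β : ℝ) : Prop :=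
  ∃ N₀ : ℕ, ∀ N ≥ N₀,
    β = (1/2) * (densCount O ord B N : ℝ) / ((q : ℝ) ^ (N * (n * (n-1) / 2)))

/-- A unimodular (Gram) matrix: integral entries and unit determinant. -/
def IsUnimodularMat (O : Subring F) (ord : F → ℤ) {ι : Type} [Fintype ι] [DecidableEq ι]
    (C : Matrix ι ι F) : Prop :=
  (∀ i j, C i j ∈ O) ∧ C.det ≠ 0 ∧ ord C.det = 0

/-- `C` is `π^i`-modular. -/
def IsModularMat (O : Subring F) (ord : F → ℤ) (π : F) {ι : Type} [Fintype ι] [DecidableEq ι]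
    (C : Matrix ι ι F) (i : ℤ) : Prop :=
  IsUnimodularMat O ord (π ^ (-i) • C)

/-- `B` is (the Gram matrix of) a Jordan splitting, the block of level `i`
consisting of the indices `s` with `m s = i`, and being `π^i`-modular. -/
def IsJordanMatrix (O : Subring F) (ord : F → ℤ) (π : F) {n : ℕ}
    (B : Matrix (Fin n) (Fin n) F) (m : Fin n → ℤ) : Prop :=
  (∀ s t, m s ≠ m t → B s t = 0) ∧
  ∀ i : ℤ, (∃ s, m s = i) →
    IsModularMat O ord π
      (B.submatrix (fun s : {s : Fin n // m s = i} => (s : Fin n))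
        (fun s : {s : Fin n // m s = i} => (s : Fin n))) i

/-- The `π^i`-modular Jordan component of the lattice with Gram matrix `B` is nonzero. -/
def HasJordanComponent (O : Subring F) (ord : F → ℤ) (π : F) {n : ℕ}
    (B : Matrix (Fin n) (Fin n) F) (i : ℤ) : Prop :=
  ∃ (B' : Matrix (Fin n) (Fin n) F) (m : Fin n → ℤ),
    EquivO O ord B B' ∧ IsJordanMatrix O ord π B' m ∧ ∃ s, m s = i

/-- number of indices in the level `i` Jordan block. -/
def jordanRank {n : ℕ} (m : Fin n → ℤ) (i : ℤ) : ℕ :=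
  (Finset.univ.filter fun s => m s = i).card

/-- The level `i` Jordan constituent of the Jordan matrix `B` has parity type I,
i.e. its norm ideal is all of `O` (some normalized diagonal entry is a unit). -/
def JordanTypeI (ord : F → ℤ) (π : F) {n : ℕ}
    (B : Matrix (Fin n) (Fin n) F) (m : Fin n → ℤ) (i : ℤ) : Prop :=
  ∃ s, m s = i ∧ π ^ (-i) * B s s ≠ 0 ∧ ord (π ^ (-i) * B s s) = 0

/-- The sublattice `L ∩ π^i L♯ = {x ∈ 𝔬ⁿ : ⟨x, L⟩ ⊆ π^i 𝔬}` of the lattice with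
Gram matrix `B`. -/
def DualCapLattice (O : Subring F) (π : F) {n : ℕ}
    (B : Matrix (Fin n) (Fin n) F) (i : ℤ) : Set (Fin n → F) :=
  {x | (∀ s, x s ∈ O) ∧ ∀ s, MemScale O (π ^ i) (B.mulVec x s)}

/-- `C` is a Gram matrix of the quadratic lattice `(L ∩ π^i L♯, π^{-i} Q)`. -/
def IsGramOfDualCap (O : Subring F) (π : F) {n : ℕ}
    (B : Matrix (Fin n) (Fin n) F) (i : ℤ) (C : Matrix (Fin n) (Fin n) F) : Prop :=
  ∃ W : Matrix (Fin n) (Fin n) F, W.det ≠ 0 ∧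
    (∀ t, (fun s => W s t) ∈ DualCapLattice O π B i) ∧
    (∀ x ∈ DualCapLattice O π B i, ∃ c : Fin n → F, (∀ t, c t ∈ O) ∧ x = W.mulVec c) ∧
    C = π ^ (-i) • (W.transpose * B * W)

/-- `σ` is an `a`-admissible involution (Ikeda–Katsurada). -/
def IsAdmissible {n : ℕ} (a : Fin n → ℕ) (σ : Fin n → Fin n) : Prop :=
  Monotone a ∧
  (∀ i, σ (σ i) = i) ∧
  -- `#P⁰ ≤ 2`
  (∀ i j k, σ i = i → σ j = j → σ k = k → i = j ∨ i = k ∨ j = k) ∧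
  -- distinct fixed points have values of different parities
  (∀ i j, σ i = i → σ j = j → i ≠ j → a i % 2 ≠ a j % 2) ∧
  -- maximality condition at fixed points
  (∀ i, σ i = i → ∀ j, (σ j = j ∨ a (σ j) < a j) → a j % 2 = a i % 2 → a j ≤ a i) ∧
  -- at most one element of `P⁺` in each block
  (∀ i j, a i = a j → a (σ i) < a i → a (σ j) < a j → i = j) ∧
  -- at most one element of `P⁻ ∪ P⁰` in each block
  (∀ i j, a i = a j → (a i < a (σ i) ∨ σ i = i) → (a j < a (σ j) ∨ σ j = j) → i = j) ∧
  -- the matching conditions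
  (∀ i, a i < a (σ i) → a (σ i) % 2 = a i % 2 ∧
    ∀ j, a (σ j) < a j → a i < a j → a j % 2 = a i % 2 → a (σ i) ≤ a j) ∧
  ∀ i, a (σ i) < a i →
    ∀ j, a j < a (σ j) → a j < a i → a j % 2 = a i % 2 → a j ≤ a (σ i)

/-- `B` is a reduced form of GK type `(a, σ)` (Ikeda–Katsurada). -/
def IsReducedForm (O : Subring F) (ord : F → ℤ) {n : ℕ}
    (B : Matrix (Fin n) (Fin n) F) (a : Fin n → ℕ) (σ : Fin n → Fin n) : Prop :=
  HalfIntegral O B ∧ B.det ≠ 0 ∧ InS ord B a ∧ IsAdmissible a σ ∧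
  (∀ i, σ i ≠ i → 2 * B i (σ i) ≠ 0 ∧ 2 * ord (2 * B i (σ i)) = (a i : ℤ) + (a (σ i) : ℤ)) ∧
  (∀ i, (σ i = i ∨ a i < a (σ i)) → B i i ≠ 0 ∧ ord (B i i) = (a i : ℤ)) ∧
  ∀ i j, j ≠ i → j ≠ σ i → 2 * B i j = 0 ∨ (a i : ℤ) + (a j : ℤ) < 2 * ord (2 * B i j)

/-- `D` is a nonzero square of `F`. -/
def IsSquareNZ (D : F) : Prop := ∃ c : F, c ≠ 0 ∧ D = c * c

/-- `F(√D)/F` is unramified (possibly trivial): `D` times a square is of the form `1 + 4t`,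
`t ∈ O`. -/
def UnramSqrt (O : Subring F) (D : F) : Prop :=
  ∃ c t : F, c ≠ 0 ∧ t ∈ O ∧ D * (c * c) = 1 + 4 * t

/-- `ζ = ξ_B` for a (nondegenerate) even-size half-integral `B`. -/
def XiIs (O : Subring F) {n : ℕ} (B : Matrix (Fin n) (Fin n) F) (ζ : ℤ) : Prop :=
  (IsSquareNZ ((-4 : F) ^ (n / 2) * B.det) ∧ ζ = 1) ∨
  (¬ IsSquareNZ ((-4 : F) ^ (n / 2) * B.det) ∧
    UnramSqrt O ((-4 : F) ^ (n / 2) * B.det) ∧ ζ = -1) ∨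
  (¬ IsSquareNZ ((-4 : F) ^ (n / 2) * B.det) ∧
    ¬ UnramSqrt O ((-4 : F) ^ (n / 2) * B.det) ∧ ζ = 0)

/-- the columns of `W` span a totally isotropic subspace for `B`. -/
def IsIsotropicSub {n k : ℕ} (B : Matrix (Fin n) (Fin n) F)
    (W : Matrix (Fin n) (Fin k) F) : Prop :=
  (∀ c : Fin k → F, W.mulVec c = 0 → c = 0) ∧ ∀ s t, (W.transpose * B * W) s t = 0

/-- `(Fⁿ, B)` is split: it has a totally isotropic subspace of dimension `⌊n/2⌋`. -/
def SplitSpace {n : ℕ} (B : Matrix (Fin n) (Fin n) F) : Prop :=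
  ∃ W : Matrix (Fin n) (Fin (n / 2)) F, IsIsotropicSub B W

/-- `ζ = η_B` for an odd-size nondegenerate `B`. -/
def EtaIs {n : ℕ} (B : Matrix (Fin n) (Fin n) F) (ζ : ℤ) : Prop :=
  (SplitSpace B ∧ ζ = 1) ∨ (¬ SplitSpace B ∧ ζ = -1)

/-- An extended Gross–Keating datum `(n₁,…,n_r; m₁,…,m_r; ζ₁,…,ζ_r)`. -/
def EGKDatum : Type := Σ r : ℕ, (Fin r → ℕ) × (Fin r → ℕ) × (Fin r → ℤ)

/-- leading principal `k × k` submatrix. -/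
def leadBlock {n : ℕ} (B : Matrix (Fin n) (Fin n) F) (k : ℕ) (h : k ≤ n) :
    Matrix (Fin k) (Fin k) F :=
  B.submatrix (Fin.castLE h) (Fin.castLE h)

/-- `dat = (n₁,…,n_r; m₁,…,m_r; ζ₁,…,ζ_r)` is the extended GK datum of the reduced
form `B` with `GK(B) = a`. -/
def IsEGKOfReduced (O : Subring F) {n : ℕ} (B : Matrix (Fin n) (Fin n) F)
    (a : Fin n → ℕ) (dat : EGKDatum) : Prop :=
  StrictMono dat.2.2.1 ∧
  (∀ s, 0 < dat.2.1 s) ∧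
  (∀ t : Fin n, ∃ s, a t = dat.2.2.1 s) ∧
  (∀ s, (Finset.univ.filter fun t => a t = dat.2.2.1 s).card = dat.2.1 s) ∧
  ∀ s : Fin dat.1,
    ∃ h : (∑ u ∈ Finset.univ.filter (fun u => u ≤ s), dat.2.1 u) ≤ n,
      ((∑ u ∈ Finset.univ.filter (fun u => u ≤ s), dat.2.1 u) % 2 = 0 →
        XiIs O (leadBlock B _ h) (dat.2.2.2 s)) ∧
      ((∑ u ∈ Finset.univ.filter (fun u => u ≤ s), dat.2.1 u) % 2 = 1 →
        EtaIs (leadBlock B _ h) (dat.2.2.2 s))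

/-- `dat` is the extended GK datum of (the lattice with Gram matrix) `B`. -/
def IsEGK (O : Subring F) (ord : F → ℤ) {n : ℕ} (B : Matrix (Fin n) (Fin n) F)
    (dat : EGKDatum) : Prop :=
  ∃ (B' : Matrix (Fin n) (Fin n) F) (a : Fin n → ℕ) (σ : Fin n → Fin n),
    EquivO O ord B B' ∧ IsReducedForm O ord B' a σ ∧ IsEGKOfReduced O B' a dat

/-- `dat` is the truncated extended GK datum `EGK(B)^{≤1}`: the EGK datum of the
upper-left block (of size the number of GK entries `≤ 1`) of a reduced form
equivalent to `B`. -/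
def IsEGKle1 (O : Subring F) (ord : F → ℤ) {n : ℕ} (B : Matrix (Fin n) (Fin n) F)
    (dat : EGKDatum) : Prop :=
  ∃ (B' : Matrix (Fin n) (Fin n) F) (a : Fin n → ℕ) (σ : Fin n → Fin n)
    (h : (Finset.univ.filter fun t => a t ≤ 1).card ≤ n),
    EquivO O ord B B' ∧ IsReducedForm O ord B' a σ ∧
    IsEGK O ord (leadBlock B' _ h) dat

/-- truncated EGK datum computed from a given reduced form `B` itself. -/
def TruncEGKOfReduced (O : Subring F) (ord : F → ℤ) {n : ℕ}
    (B : Matrix (Fin n) (Fin n) F) (dat : EGKDatum) : Prop :=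
  ∃ (a : Fin n → ℕ) (σ : Fin n → Fin n)
    (h : (Finset.univ.filter fun t => a t ≤ 1).card ≤ n),
    IsReducedForm O ord B a σ ∧ IsEGK O ord (leadBlock B _ h) dat

/-- `c` is the non-decreasing rearrangement of the concatenation of `a` and `b`. -/
def IsMergeOf {m k n : ℕ} (a : Fin m → ℕ) (b : Fin k → ℕ) (c : Fin n → ℕ) : Prop :=
  Monotone c ∧ ∃ φ : (Fin m ⊕ Fin k) ≃ Fin n, ∀ x, c (φ x) = Sum.elim a b x

/-- the value `Q(x) = ᵗx·C·x` of the quadratic form with Gram matrix `C`. -/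
def Qval {n : ℕ} (C : Matrix (Fin n) (Fin n) F) (x : Fin n → F) : F :=
  dotProduct x (C.mulVec x)

/-- the sublattice `B(A)` of `A = 𝔬ⁿ`: integral vectors with `Q(x) ∈ 2𝔬`. -/
def BAset (O : Subring F) {n : ℕ} (C : Matrix (Fin n) (Fin n) F) : Set (Fin n → F) :=
  {x | (∀ s, x s ∈ O) ∧ MemScale O 2 (Qval C x)}

/-- membership in the sublattice `Z(A)`: the radical of the quadratic form
`(1/2)Q mod 2` on `B(A)/2A`. -/
def InZA (O : Subring F) {n : ℕ} (C : Matrix (Fin n) (Fin n) F) (x : Fin n → F) : Prop :=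
  x ∈ BAset O C ∧ MemScale O 4 (Qval C x) ∧
    ∀ y ∈ BAset O C, MemScale O 2 (dotProduct x (C.mulVec y))

/-- the cardinality of the residue space `V̄ = B(A)/Z(A)`. -/
def residueSpaceCard (O : Subring F) {n : ℕ} (C : Matrix (Fin n) (Fin n) F) : ℕ :=
  Nat.card (Quot (fun x y : (BAset O C : Set (Fin n → F)) => InZA O C (x.1 - y.1)))

/-- the norm ideal of the lattice with Gram matrix `C` is all of `𝔬`. -/
def NormUnit (O : Subring F) (ord : F → ℤ) {n : ℕ} (C : Matrix (Fin n) (Fin n) F) : Prop :=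
  ∃ x : Fin n → F, (∀ s, x s ∈ O) ∧ Qval C x ≠ 0 ∧ ord (Qval C x) = 0

/-- the residue quadratic form `q̄` on `V̄ = B(A)/Z(A)` is split: `V̄` has even
dimension `2k` and carries a totally isotropic subspace of dimension `k`. -/
def ResidueSplit (O : Subring F) (ord : F → ℤ) (q : ℕ) {n : ℕ}
    (C : Matrix (Fin n) (Fin n) F) : Prop :=
  ∃ k : ℕ, residueSpaceCard O C = q ^ (2 * k) ∧
    ∃ vs : Fin k → (Fin n → F),
      (∀ t, vs t ∈ BAset O C) ∧
      (∀ t, MemScale O 4 (Qval C (vs t))) ∧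
      (∀ s t, MemScale O 2 (dotProduct (vs s) (C.mulVec (vs t)))) ∧
      ∀ c : Fin k → F, (∀ t, c t ∈ O) → (∃ t, c t ≠ 0 ∧ ord (c t) = 0) →
        ¬ InZA O C (∑ t, c t • vs t)

/-- a square matrix over `F` of some size. -/
def SqB (F : Type) [Field F] : Type := (k : ℕ) × Matrix (Fin k) (Fin k) F

/-- total size of a list of square matrices. -/
def dims : List (SqB F) → ℕ
  | [] => 0
  | a :: t => a.1 + dims t

/-- orthogonal sum of a list of square matrices. -/
def listSum : (l : List (SqB F)) → Matrix (Fin (dims l)) (Fin (dims l)) F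
  | [] => 0
  | a :: t => orthSum a.2 (listSum t)

/-- a `2×2` block `2^i·[[2a, u],[u, 2b]]` with `a, b ∈ 𝔬`, `u ∈ 𝔬ˣ`. -/
def IsDagBlock (O : Subring F) (ord : F → ℤ) (π : F) (i : ℤ) (blk : SqB F) : Prop :=
  ∃ a u b : F, a ∈ O ∧ b ∈ O ∧ u ∈ O ∧ u ≠ 0 ∧ ord u = 0 ∧
    blk = ⟨2, π ^ i • !![2*a, u; u, 2*b]⟩

/-- The data of a semisimple quadratic `F`-algebra `E` (a quadratic field extension or
`F × F`), together with a generator `ω` of its maximal order `𝔬_E = 𝔬 + 𝔬ω`,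
the valuation `d` of the discriminant of `E/F`, and the invariant `ξ`. -/
structure QuadAlgebraAxioms (O : Subring F) (ord : F → ℤ)
    (E : Type) [CommRing E] [Algebra F E] (ω : E) (d : ℕ) (ξ : ℤ) : Prop where
  finrank_two : Module.finrank F E = 2
  reduced : ∀ x : E, x * x = 0 → x = 0
  indep : ∀ a b : F, algebraMap F E a + algebraMap F E b * ω = 0 → a = 0 ∧ b = 0
  trace_mem : Algebra.trace F E ω ∈ O
  norm_mem : Algebra.norm F ω ∈ O
  max_order : ∀ x : E, Algebra.trace F E x ∈ O → Algebra.norm F x ∈ O →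
    ∃ a b : F, a ∈ O ∧ b ∈ O ∧ x = algebraMap F E a + algebraMap F E b * ω
  disc_ne : (Algebra.trace F E ω) ^ 2 - 4 * Algebra.norm F ω ≠ 0
  disc_ord : ord ((Algebra.trace F E ω) ^ 2 - 4 * Algebra.norm F ω) = d
  xi_def : ξ = if (∃ x : E, x * x = x ∧ x ≠ 0 ∧ x ≠ 1) then 1 else if d = 0 then -1 else 0

/-- Gram matrix of the norm form on the order `𝔬_{E,f} = 𝔬 + 𝔬·ϖ^f ω` of conductor `f`,
with respect to the basis `(1, ϖ^f ω)`; here `T = tr(ω)` and `S = N(ω)`. -/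
def normGram (π T S : F) (f : ℕ) : Matrix (Fin 2) (Fin 2) F :=
  !![1, π ^ f * T / 2; π ^ f * T / 2, π ^ (2 * f) * S]

/-- the order `𝔬_{E,f} = 𝔬 + 𝔭^f 𝔬_E`, as a subset of `E`. -/
def orderSet (O : Subring F) (π : F) {E : Type} [CommRing E] [Algebra F E]
    (ω : E) (f : ℕ) : Set E :=
  {x | ∃ a b : F, a ∈ O ∧ b ∈ O ∧ x = algebraMap F E a + algebraMap F E (b * π ^ f) * ω}

/-- the set `V_N = {α ∈ 𝔬_{E,f} : 𝒩(α) ≡ 1 mod 𝔭^N}`. -/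
def normOneSet (O : Subring F) (ord : F → ℤ) (π : F) {E : Type} [CommRing E] [Algebra F E]
    (ω : E) (f N : ℕ) : Set E :=
  {x ∈ orderSet O π ω f |
    Algebra.norm F x - 1 = 0 ∨ (N : ℤ) ≤ ord (Algebra.norm F x - 1)}

/-- a rank‑2 lattice Gram matrix is indecomposable: not `GL₂(𝔬)`-equivalent to an
orthogonal sum of two rank‑1 lattices. -/
def Indecomposable2 (O : Subring F) (ord : F → ℤ) (G : Matrix (Fin 2) (Fin 2) F) : Prop :=
  ¬ ∃ B' : Matrix (Fin 2) (Fin 2) F, EquivO O ord G B' ∧ B' 0 1 = 0 ∧ B' 1 0 = 0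



namespace GKAux


variable (ord : F → ℤ)

/-- `x = 0` or `k ≤ 2 ord x`. -/
def V2 (x : F) (k : ℤ) : Prop := x = 0 ∨ k ≤ 2 * ord x

/-- `x ≠ 0` and `2 ord x = k`. -/
def E2 (x : F) (k : ℤ) : Prop := x ≠ 0 ∧ 2 * ord x = k

variable {ord}
variable (hmul : ∀ x y : F, x ≠ 0 → y ≠ 0 → ord (x * y) = ord x + ord y)
variable (hmin : ∀ x y : F, x ≠ 0 → y ≠ 0 → x + y ≠ 0 → min (ord x) (ord y) ≤ ord (x + y))

section
include hmul

lemma ord_one : ord (1 : F) = 0 := by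
  have h := hmul 1 1 one_ne_zero one_ne_zero
  simp at h; omega

lemma ord_neg_one : ord (-1 : F) = 0 := by
  have h := hmul (-1) (-1) (by norm_num) (by norm_num)
  simp at h
  have h1 := ord_one hmul (F := F)
  omega

lemma ord_neg (x : F) (hx : x ≠ 0) : ord (-x) = ord x := by
  have h := hmul (-1) x (by norm_num) hx
  rw [neg_one_mul] at h
  rw [h, ord_neg_one hmul]; ring

lemma ord_inv (x : F) (hx : x ≠ 0) : ord x⁻¹ = - ord x := by
  have h := hmul x x⁻¹ hx (inv_ne_zero hx)
  rw [mul_inv_cancel₀ hx, ord_one hmul] at h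
  omega

lemma V2.mul {x y : F} {k l : ℤ} (h1 : V2 ord x k) (h2 : V2 ord y l) :
    V2 ord (x * y) (k + l) := by
  rcases h1 with h1 | h1
  · exact Or.inl (by rw [h1, zero_mul])
  rcases h2 with h2 | h2
  · exact Or.inl (by rw [h2, mul_zero])
  by_cases hx : x = 0
  · exact Or.inl (by rw [hx, zero_mul])
  by_cases hy : y = 0
  · exact Or.inl (by rw [hy, mul_zero])
  right
  rw [hmul x y hx hy]; omega

lemma E2.mul {x y : F} {k l : ℤ} (h1 : E2 ord x k) (h2 : E2 ord y l) :
    E2 ord (x * y) (k + l) := by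
  refine ⟨mul_ne_zero h1.1 h2.1, ?_⟩
  rw [hmul x y h1.1 h2.1]
  have := h1.2; have := h2.2; omega

lemma E2.inv {x : F} {k : ℤ} (h : E2 ord x k) : E2 ord x⁻¹ (-k) := by
  refine ⟨inv_ne_zero h.1, ?_⟩
  rw [ord_inv hmul x h.1]; have := h.2; omega

lemma E2.neg {x : F} {k : ℤ} (h : E2 ord x k) : E2 ord (-x) k :=
  ⟨neg_ne_zero.mpr h.1, by rw [ord_neg hmul x h.1]; exact h.2⟩

lemma V2.neg {x : F} {k : ℤ} (h : V2 ord x k) : V2 ord (-x) k := by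
  rcases h with h | h
  · exact Or.inl (by rw [h, neg_zero])
  by_cases hx : x = 0
  · exact Or.inl (by rw [hx, neg_zero])
  · exact Or.inr (by rw [ord_neg hmul x hx]; exact h)

end

lemma V2.mono {x : F} {k l : ℤ} (h : V2 ord x k) (hlk : l ≤ k) : V2 ord x l := by
  rcases h with h | h
  · exact Or.inl h
  · exact Or.inr (le_trans hlk h)

lemma E2.v2 {x : F} {k : ℤ} (h : E2 ord x k) : V2 ord x k := Or.inr (le_of_eq h.2.symm)

section
include hmin

lemma V2.add {x y : F} {k : ℤ} (h1 : V2 ord x k) (h2 : V2 ord y k) :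
    V2 ord (x + y) k := by
  rcases h1 with h1 | h1
  · rw [h1, zero_add]; exact h2
  rcases h2 with h2 | h2
  · rw [h2, add_zero]; exact Or.inr h1
  by_cases hx : x = 0
  · rw [hx, zero_add]; exact Or.inr h2
  by_cases hy : y = 0
  · rw [hy, add_zero]; exact Or.inr h1
  by_cases hxy : x + y = 0
  · exact Or.inl hxy
  right
  have := hmin x y hx hy hxy
  rcases min_le_iff.mp (le_refl (min (ord x) (ord y))) with h | h <;> omega

/-- exact + strictly larger = exact. -/
lemma E2.add_v2 (hmul : ∀ x y : F, x ≠ 0 → y ≠ 0 → ord (x * y) = ord x + ord y)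
    {x y : F} {k l : ℤ} (h1 : E2 ord x k) (h2 : V2 ord y l) (hlk : k < l) :
    E2 ord (x + y) k := by
  rcases h2 with h2 | h2
  · rw [h2, add_zero]; exact h1
  by_cases hy : y = 0
  · rw [hy, add_zero]; exact h1
  have hx := h1.1
  have hordy : ord x < ord y := by have := h1.2; omega
  have hxy : x + y ≠ 0 := by
    intro h
    have hyx : y = -x := eq_neg_of_add_eq_zero_right h
    rw [hyx, ord_neg hmul x hx] at hordy
    omega
  refine ⟨hxy, ?_⟩
  have hge : ord x ≤ ord (x + y) := by
    have := hmin x y hx hy hxy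
    omega
  have hle : ord (x + y) ≤ ord x := by
    by_contra hcon
    push_neg at hcon
    have hx' : x = (x + y) + (-y) := by ring
    have hny : (-y : F) ≠ 0 := neg_ne_zero.mpr hy
    have := hmin (x + y) (-y) hxy hny (by rw [← hx']; exact hx)
    rw [← hx', ord_neg hmul y hy] at this
    omega
  have := h1.2; omega

end




theorem det_ne_zero
    (hmul : ∀ x y : F, x ≠ 0 → y ≠ 0 → ord (x * y) = ord x + ord y)
    (hmin : ∀ x y : F, x ≠ 0 → y ≠ 0 → x + y ≠ 0 → min (ord x) (ord y) ≤ ord (x + y))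
    (h2ne : (2 : F) ≠ 0) (h2ord : ord (2 : F) = 1) :
    ∀ n : ℕ, ∀ (M : Matrix (Fin n) (Fin n) F) (a : Fin n → ℕ) (π : Fin n → Fin n),
    (∀ i j, M i j = M j i) →
    (∀ i, π (π i) = i) →
    (∀ i j, V2 ord (M i j) ((a i : ℤ) + (a j : ℤ))) →
    (∀ i, V2 ord (M i i) (2 * (a i : ℤ) + 2)) →
    (∀ i, π i ≠ i → E2 ord (M i (π i)) ((a i : ℤ) + (a (π i) : ℤ))) →
    (∀ i, π i = i → E2 ord (M i i) (2 * (a i : ℤ) + 2)) →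
    (∀ i j, j ≠ i → j ≠ π i → V2 ord (M i j) ((a i : ℤ) + (a j : ℤ) + 1)) →
    (∀ i j, π i = i → π j = j → i ≠ j → a i % 2 ≠ a j % 2) →
    M.det ≠ 0 := by
  intro n
  induction n using Nat.strong_induction_on with
  | _ n IH =>
  intro M a π hsym hinv hV hD hP hS hO hpar
  by_cases hpair : ∃ i, π i ≠ i
  case neg =>
    push_neg at hpair
    have hn2 : n ≤ 2 := by
      by_contra hn
      push_neg at hn
      have h0 : (0 : ℕ) < n := by omega
      have h1 : (1 : ℕ) < n := by omega
      have h2 : (2 : ℕ) < n := by omega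
      have hab := hpar ⟨0, h0⟩ ⟨1, h1⟩ (hpair _) (hpair _) (by simp [Fin.ext_iff])
      have hac := hpar ⟨0, h0⟩ ⟨2, h2⟩ (hpair _) (hpair _) (by simp [Fin.ext_iff])
      have hbc := hpar ⟨1, h1⟩ ⟨2, h2⟩ (hpair _) (hpair _) (by simp [Fin.ext_iff])
      omega
    interval_cases n
    · simp [Matrix.det_fin_zero]
    · rw [Matrix.det_fin_one]
      exact (hS 0 (hpair 0)).1
    · intro hdet
      rw [Matrix.det_fin_two] at hdet
      have h00 := hS 0 (hpair 0)
      have h11 := hS 1 (hpair 1)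
      have heq : M 0 0 * M 1 1 = M 0 1 * M 1 0 := by
        rw [sub_eq_zero] at hdet; exact hdet
      by_cases h01 : M 0 1 = 0
      · rw [h01, zero_mul] at heq
        exact (mul_ne_zero h00.1 h11.1) heq
      · have h10 : M 1 0 = M 0 1 := hsym 1 0
        have e1 : ord (M 0 0 * M 1 1) = ord (M 0 0) + ord (M 1 1) :=
          hmul _ _ h00.1 h11.1
        have e2 : ord (M 0 1 * M 1 0) = ord (M 0 1) + ord (M 0 1) := by
          rw [h10]; exact hmul _ _ h01 h01
        have e3 : ord (M 0 0 * M 1 1) = ord (M 0 1 * M 1 0) := by rw [heq]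
        have hpar01 := hpar 0 1 (hpair 0) (hpair 1) (by simp [Fin.ext_iff])
        have h002 := h00.2
        have h112 := h11.2
        omega
  case pos =>
    obtain ⟨i0, hne0⟩ := hpair
    have hij : i0 ≠ π i0 := fun h => hne0 h.symm
    have hn2 : 2 ≤ n := by
      rcases Nat.lt_or_ge n 2 with h | h
      · exact absurd (Fin.ext (by omega : i0.val = (π i0).val)) hij
      · exact h
    obtain ⟨k, rfl⟩ : ∃ k, n = k + 2 := ⟨n - 2, by omega⟩
    set p : Fin (k + 2) := ⟨k, by omega⟩ with hp
    set q : Fin (k + 2) := ⟨k + 1, by omega⟩ with hq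
    have hpq : p ≠ q := by simp [hp, hq, Fin.ext_iff]
    set j0 := π i0 with hj0
    set e1 : Equiv.Perm (Fin (k + 2)) := Equiv.swap i0 p with he1
    set j1 := e1 j0 with hj1
    have hj1p : j1 ≠ p := by
      rw [hj1, he1]
      by_cases h2 : j0 = p
      · rw [h2, Equiv.swap_apply_right]
        intro hc
        exact hij (hc.trans h2.symm)
      · rw [Equiv.swap_apply_of_ne_of_ne (fun h => hij h.symm : j0 ≠ i0) h2]
        exact h2
    set e2 : Equiv.Perm (Fin (k + 2)) := Equiv.swap j1 q with he2
    set φ : Equiv.Perm (Fin (k + 2)) := e1.trans e2 with hφ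
    have hφi0 : φ i0 = p := by
      have h1 : e1 i0 = p := Equiv.swap_apply_left i0 p
      simp only [hφ, Equiv.trans_apply, h1, he2]
      exact Equiv.swap_apply_of_ne_of_ne hj1p.symm hpq
    have hφj0 : φ j0 = q := by
      simp only [hφ, Equiv.trans_apply, ← hj1, he2]
      exact Equiv.swap_apply_left j1 q
    set M₂ : Matrix (Fin (k + 2)) (Fin (k + 2)) F :=
      M.submatrix φ.symm φ.symm with hM₂
    set a₂ : Fin (k + 2) → ℕ := fun i => a (φ.symm i) with ha₂
    set π₂ : Fin (k + 2) → Fin (k + 2) := fun i => φ (π (φ.symm i)) with hπ₂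
    have hM₂app : ∀ i j, M₂ i j = M (φ.symm i) (φ.symm j) := fun i j => rfl
    have hsym₂ : ∀ i j, M₂ i j = M₂ j i := fun i j => hsym _ _
    have hππ : ∀ i, π (φ.symm i) = φ.symm (π₂ i) := by
      intro i; simp only [hπ₂, Equiv.symm_apply_apply]
    have hinv₂ : ∀ i, π₂ (π₂ i) = i := by
      intro i
      simp only [hπ₂, Equiv.symm_apply_apply, hinv, Equiv.apply_symm_apply]
    have hfix₂ : ∀ i, π₂ i = i ↔ π (φ.symm i) = φ.symm i := by
      intro i
      constructor
      · intro h; rw [hππ i, h]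
      · intro h
        simp only [hπ₂, h, Equiv.apply_symm_apply]
    have hV₂ : ∀ i j, V2 ord (M₂ i j) ((a₂ i : ℤ) + (a₂ j : ℤ)) := fun i j => hV _ _
    have hD₂ : ∀ i, V2 ord (M₂ i i) (2 * (a₂ i : ℤ) + 2) := fun i => hD _
    have hP₂ : ∀ i, π₂ i ≠ i → E2 ord (M₂ i (π₂ i)) ((a₂ i : ℤ) + (a₂ (π₂ i) : ℤ)) := by
      intro i hi
      have hne : π (φ.symm i) ≠ φ.symm i := fun h => hi ((hfix₂ i).mpr h)
      have h := hP (φ.symm i) hne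
      rw [hππ i] at h
      exact h
    have hS₂ : ∀ i, π₂ i = i → E2 ord (M₂ i i) (2 * (a₂ i : ℤ) + 2) := by
      intro i hi
      exact hS (φ.symm i) ((hfix₂ i).mp hi)
    have hO₂ : ∀ i j, j ≠ i → j ≠ π₂ i → V2 ord (M₂ i j) ((a₂ i : ℤ) + (a₂ j : ℤ) + 1) := by
      intro i j hji hjπ
      refine hO (φ.symm i) (φ.symm j) (fun h => hji (φ.symm.injective h)) ?_
      intro h
      rw [hππ i] at h
      exact hjπ (φ.symm.injective h)
    have hpar₂ : ∀ i j, π₂ i = i → π₂ j = j → i ≠ j → a₂ i % 2 ≠ a₂ j % 2 := by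
      intro i j hi hj hij2
      exact hpar _ _ ((hfix₂ i).mp hi) ((hfix₂ j).mp hj)
        (fun h => hij2 (φ.symm.injective h))
    have hπ₂p : π₂ p = q := by
      have hsp : φ.symm p = i0 := by rw [← hφi0, Equiv.symm_apply_apply]
      simp only [hπ₂, hsp, ← hj0, hφj0]
    have hπ₂q : π₂ q = p := by
      have hsq : φ.symm q = j0 := by rw [← hφj0, Equiv.symm_apply_apply]
      simp only [hπ₂, hsq, hj0, hinv, hφi0]
    -- block decomposition
    set N := M₂.submatrix ⇑finSumFinEquiv ⇑finSumFinEquiv with hN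
    have hdetN : N.det = M₂.det := Matrix.det_submatrix_equiv_self finSumFinEquiv M₂
    set A := N.toBlocks₁₁ with hA
    set Bm := N.toBlocks₁₂ with hBm
    set Cm := N.toBlocks₂₁ with hCm
    set Dm := N.toBlocks₂₂ with hDm
    set castK : Fin k → Fin (k + 2) := Fin.castAdd 2 with hcastK
    have hcastval : ∀ s : Fin k, (castK s).val = s.val := fun s => rfl
    have hn0 : (Fin.natAdd k (0 : Fin 2)) = p := by
      apply Fin.ext; simp [hp]
    have hn1 : (Fin.natAdd k (1 : Fin 2)) = q := by
      apply Fin.ext; simp [hq]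
    have hAapp : ∀ s t, A s t = M₂ (castK s) (castK t) := by
      intro s t
      simp [hA, Matrix.toBlocks₁₁, hN, hcastK]
    have hB0 : ∀ s, Bm s 0 = M₂ (castK s) p := by
      intro s
      simp [hBm, Matrix.toBlocks₁₂, hN, hcastK, hn0]
    have hB1 : ∀ s, Bm s 1 = M₂ (castK s) q := by
      intro s
      simp [hBm, Matrix.toBlocks₁₂, hN, hcastK, hn1]
    have hC0 : ∀ t, Cm 0 t = M₂ (castK t) p := by
      intro t
      simp only [hCm, Matrix.toBlocks₂₁, Matrix.of_apply, hN, Matrix.submatrix_apply,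
        finSumFinEquiv_apply_left, finSumFinEquiv_apply_right, hn0]
      exact hsym₂ _ _
    have hC1 : ∀ t, Cm 1 t = M₂ (castK t) q := by
      intro t
      simp only [hCm, Matrix.toBlocks₂₁, Matrix.of_apply, hN, Matrix.submatrix_apply,
        finSumFinEquiv_apply_left, finSumFinEquiv_apply_right, hn1]
      exact hsym₂ _ _
    have hD00 : Dm 0 0 = M₂ p p := by
      simp [hDm, Matrix.toBlocks₂₂, hN, hn0]
    have hD11 : Dm 1 1 = M₂ q q := by
      simp [hDm, Matrix.toBlocks₂₂, hN, hn1]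
    have hD01 : Dm 0 1 = M₂ p q := by
      simp [hDm, Matrix.toBlocks₂₂, hN, hn0, hn1]
    have hD10 : Dm 1 0 = M₂ p q := by
      simp only [hDm, Matrix.toBlocks₂₂, Matrix.of_apply, hN, Matrix.submatrix_apply,
        finSumFinEquiv_apply_right, hn0, hn1]
      exact hsym₂ _ _
    set u := M₂ p q with hu_def
    have hu : E2 ord u ((a₂ p : ℤ) + (a₂ q : ℤ)) := by
      have h := hP₂ p (by rw [hπ₂p]; exact hpq.symm)
      rw [hπ₂p] at h
      exact h
    have hdetD : E2 ord Dm.det (2 * (a₂ p : ℤ) + 2 * (a₂ q : ℤ)) := by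
      rw [Matrix.det_fin_two, hD00, hD11, hD01, hD10]
      rw [show M₂ p p * M₂ q q - u * u = -(u * u) + M₂ p p * M₂ q q by ring]
      have h1 : E2 ord (-(u * u)) (2 * (a₂ p : ℤ) + 2 * (a₂ q : ℤ)) := by
        have := E2.neg hmul (E2.mul hmul hu hu)
        exact ⟨this.1, by rw [this.2]; ring⟩
      have := E2.add_v2 hmin hmul h1 ((hD₂ p).mul hmul (hD₂ q)) (by omega)
      exact this
    have hDinv : Invertible Dm := Dm.invertibleOfIsUnitDet (isUnit_iff_ne_zero.mpr hdetD.1)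
    have hdet2 : N.det = Dm.det * (A - Bm * Dm⁻¹ * Cm).det := by
      conv_lhs => rw [← Matrix.fromBlocks_toBlocks N]
      rw [Matrix.det_fromBlocks₂₂, Matrix.invOf_eq_nonsing_inv]
    set S := A - Bm * Dm⁻¹ * Cm with hSdef
    have hdetinv : E2 ord (Dm.det)⁻¹ (-(2 * (a₂ p : ℤ) + 2 * (a₂ q : ℤ))) :=
      E2.inv hmul hdetD
    have hi00 : Dm⁻¹ 0 0 = (Dm.det)⁻¹ * M₂ q q := by
      rw [Matrix.inv_def, Ring.inverse_eq_inv, Matrix.adjugate_fin_two]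
      simp [hD11]
    have hi01 : Dm⁻¹ 0 1 = (Dm.det)⁻¹ * (-u) := by
      rw [Matrix.inv_def, Ring.inverse_eq_inv, Matrix.adjugate_fin_two]
      simp [hD01]
    have hi10 : Dm⁻¹ 1 0 = (Dm.det)⁻¹ * (-u) := by
      rw [Matrix.inv_def, Ring.inverse_eq_inv, Matrix.adjugate_fin_two]
      simp [hD10]
    have hi11 : Dm⁻¹ 1 1 = (Dm.det)⁻¹ * M₂ p p := by
      rw [Matrix.inv_def, Ring.inverse_eq_inv, Matrix.adjugate_fin_two]
      simp [hD00]
    have hBDC : ∀ s t, (Bm * Dm⁻¹ * Cm) s t =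
        (Dm.det)⁻¹ * (M₂ (castK s) p * M₂ q q * M₂ (castK t) p) +
        ((Dm.det)⁻¹ * -(M₂ (castK s) p * u * M₂ (castK t) q) +
         ((Dm.det)⁻¹ * -(M₂ (castK s) q * u * M₂ (castK t) p) +
          (Dm.det)⁻¹ * (M₂ (castK s) q * M₂ p p * M₂ (castK t) q))) := by
      intro s t
      have e : (Bm * Dm⁻¹ * Cm) s t =
          (Bm s 0 * Dm⁻¹ 0 0 + Bm s 1 * Dm⁻¹ 1 0) * Cm 0 t +
          (Bm s 0 * Dm⁻¹ 0 1 + Bm s 1 * Dm⁻¹ 1 1) * Cm 1 t := by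
        simp [Matrix.mul_apply, Fin.sum_univ_two]
      rw [e, hi00, hi01, hi10, hi11, hB0, hB1, hC0, hC1]
      ring
    have hKp : ∀ s : Fin k, castK s ≠ p ∧ castK s ≠ q := by
      intro s
      have hs := s.isLt
      constructor
      · intro h
        have h' := congrArg Fin.val h
        simp [hp, hcastK] at h'
        omega
      · intro h
        have h' := congrArg Fin.val h
        simp [hq, hcastK] at h'
        omega
    have hπKp : ∀ s : Fin k, π₂ (castK s) ≠ p ∧ π₂ (castK s) ≠ q := by
      intro s
      constructor
      · intro h
        have := congrArg π₂ h
        rw [hinv₂, hπ₂p] at this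
        exact (hKp s).2 this
      · intro h
        have := congrArg π₂ h
        rw [hinv₂, hπ₂q] at this
        exact (hKp s).1 this
    have hx0 : ∀ s : Fin k, V2 ord (M₂ (castK s) p) ((a₂ (castK s) : ℤ) + (a₂ p : ℤ) + 1) :=
      fun s => hO₂ (castK s) p (hKp s).1.symm (fun h => (hπKp s).1 h.symm)
    have hx1 : ∀ s : Fin k, V2 ord (M₂ (castK s) q) ((a₂ (castK s) : ℤ) + (a₂ q : ℤ) + 1) :=
      fun s => hO₂ (castK s) q (hKp s).2.symm (fun h => (hπKp s).2 h.symm)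
    have hcorr : ∀ s t, V2 ord ((Bm * Dm⁻¹ * Cm) s t)
        ((a₂ (castK s) : ℤ) + (a₂ (castK t) : ℤ) + 2) := by
      intro s t
      rw [hBDC s t]
      have p1 : V2 ord ((Dm.det)⁻¹ * (M₂ (castK s) p * M₂ q q * M₂ (castK t) p))
          ((a₂ (castK s) : ℤ) + (a₂ (castK t) : ℤ) + 2) := by
        have := (E2.v2 hdetinv).mul hmul (((hx0 s).mul hmul (hD₂ q)).mul hmul (hx0 t))
        exact this.mono (by omega)
      have p2 : V2 ord ((Dm.det)⁻¹ * -(M₂ (castK s) p * u * M₂ (castK t) q))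
          ((a₂ (castK s) : ℤ) + (a₂ (castK t) : ℤ) + 2) := by
        have := (E2.v2 hdetinv).mul hmul
          (V2.neg hmul (((hx0 s).mul hmul (E2.v2 hu)).mul hmul (hx1 t)))
        exact this.mono (by omega)
      have p3 : V2 ord ((Dm.det)⁻¹ * -(M₂ (castK s) q * u * M₂ (castK t) p))
          ((a₂ (castK s) : ℤ) + (a₂ (castK t) : ℤ) + 2) := by
        have := (E2.v2 hdetinv).mul hmul
          (V2.neg hmul (((hx1 s).mul hmul (E2.v2 hu)).mul hmul (hx0 t)))
        exact this.mono (by omega)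
      have p4 : V2 ord ((Dm.det)⁻¹ * (M₂ (castK s) q * M₂ p p * M₂ (castK t) q))
          ((a₂ (castK s) : ℤ) + (a₂ (castK t) : ℤ) + 2) := by
        have := (E2.v2 hdetinv).mul hmul (((hx1 s).mul hmul (hD₂ p)).mul hmul (hx1 t))
        exact this.mono (by omega)
      exact V2.add hmin p1 (V2.add hmin p2 (V2.add hmin p3 p4))
    have hcorrd : ∀ s, V2 ord ((Bm * Dm⁻¹ * Cm) s s)
        (2 * (a₂ (castK s) : ℤ) + 4) := by
      intro s
      rw [hBDC s s]
      rw [show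
        (Dm.det)⁻¹ * (M₂ (castK s) p * M₂ q q * M₂ (castK s) p) +
        ((Dm.det)⁻¹ * -(M₂ (castK s) p * u * M₂ (castK s) q) +
         ((Dm.det)⁻¹ * -(M₂ (castK s) q * u * M₂ (castK s) p) +
          (Dm.det)⁻¹ * (M₂ (castK s) q * M₂ p p * M₂ (castK s) q))) =
        (Dm.det)⁻¹ * (M₂ (castK s) p * M₂ q q * M₂ (castK s) p) +
        ((Dm.det)⁻¹ * -((2:F) * (M₂ (castK s) p * u * M₂ (castK s) q)) +
          (Dm.det)⁻¹ * (M₂ (castK s) q * M₂ p p * M₂ (castK s) q)) from by ring]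
      have h2E : E2 ord (2 : F) 2 := ⟨h2ne, by rw [h2ord]; ring⟩
      have p1 : V2 ord ((Dm.det)⁻¹ * (M₂ (castK s) p * M₂ q q * M₂ (castK s) p))
          (2 * (a₂ (castK s) : ℤ) + 4) := by
        have := (E2.v2 hdetinv).mul hmul (((hx0 s).mul hmul (hD₂ q)).mul hmul (hx0 s))
        exact this.mono (by omega)
      have p2 : V2 ord ((Dm.det)⁻¹ * -((2:F) * (M₂ (castK s) p * u * M₂ (castK s) q)))
          (2 * (a₂ (castK s) : ℤ) + 4) := by
        have := (E2.v2 hdetinv).mul hmul (V2.neg hmul ((E2.v2 h2E).mul hmul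
          (((hx0 s).mul hmul (E2.v2 hu)).mul hmul (hx1 s))))
        exact this.mono (by omega)
      have p4 : V2 ord ((Dm.det)⁻¹ * (M₂ (castK s) q * M₂ p p * M₂ (castK s) q))
          (2 * (a₂ (castK s) : ℤ) + 4) := by
        have := (E2.v2 hdetinv).mul hmul (((hx1 s).mul hmul (hD₂ p)).mul hmul (hx1 s))
        exact this.mono (by omega)
      exact V2.add hmin p1 (V2.add hmin p2 p4)
    -- data on the Schur complement
    have hπKlt : ∀ s : Fin k, (π₂ (castK s)).val < k := by
      intro s
      have h1 := (hπKp s).1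
      have h2 := (hπKp s).2
      have h3 := (π₂ (castK s)).isLt
      rcases Nat.lt_or_ge (π₂ (castK s)).val k with h | h
      · exact h
      · exfalso
        rcases Nat.lt_or_ge (π₂ (castK s)).val (k + 1) with h' | h'
        · exact h1 (Fin.ext (by simp [hp]; omega))
        · exact h2 (Fin.ext (by simp [hq]; omega))
    set π' : Fin k → Fin k := fun s => ⟨(π₂ (castK s)).val, hπKlt s⟩ with hπ'
    have hembπ : ∀ s, castK (π' s) = π₂ (castK s) := by
      intro s
      apply Fin.ext
      simp [hcastval, hπ']
    have hSapp : ∀ s t, S s t = A s t - (Bm * Dm⁻¹ * Cm) s t := by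
      intro s t; rw [hSdef]; rfl
    have hπ'fix : ∀ s, π' s = s ↔ π₂ (castK s) = castK s := by
      intro s
      constructor
      · intro h
        rw [← hembπ s, h]
      · intro h
        apply Fin.ext
        have := congrArg Fin.val h
        simpa [hπ', hcastval] using this
    -- hypotheses for IH
    have hsym' : ∀ s t, S s t = S t s := by
      intro s t
      rw [hSapp, hSapp, hAapp, hAapp, hBDC, hBDC,
        hsym₂ (castK s) (castK t), hsym₂ (castK s) p, hsym₂ (castK s) q]
      ring
    have hinv' : ∀ s, π' (π' s) = s := by
      intro s
      apply Fin.ext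
      have h : castK (π' (π' s)) = castK s := by
        rw [hembπ, hembπ, hinv₂]
      simpa [hcastval] using congrArg Fin.val h
    have hV' : ∀ s t, V2 ord (S s t) ((a₂ (castK s) : ℤ) + (a₂ (castK t) : ℤ)) := by
      intro s t
      rw [hSapp, sub_eq_add_neg]
      have hA' := hV₂ (castK s) (castK t)
      rw [← hAapp] at hA'
      exact V2.add hmin hA' (V2.neg hmul ((hcorr s t).mono (by omega)))
    have hD' : ∀ s, V2 ord (S s s) (2 * (a₂ (castK s) : ℤ) + 2) := by
      intro s
      rw [hSapp, sub_eq_add_neg]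
      have hA' := hD₂ (castK s)
      rw [← hAapp] at hA'
      exact V2.add hmin hA' (V2.neg hmul ((hcorrd s).mono (by omega)))
    have hP' : ∀ s, π' s ≠ s → E2 ord (S s (π' s)) ((a₂ (castK s) : ℤ) + (a₂ (castK (π' s)) : ℤ)) := by
      intro s hs
      have hne : π₂ (castK s) ≠ castK s := fun h => hs ((hπ'fix s).mpr h)
      have hE := hP₂ (castK s) hne
      rw [hSapp, sub_eq_add_neg]
      have hA' : A s (π' s) = M₂ (castK s) (π₂ (castK s)) := by
        rw [hAapp, hembπ]
      rw [← hA'] at hE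
      have hkey : (a₂ (castK (π' s)) : ℤ) = (a₂ (π₂ (castK s)) : ℤ) := by rw [hembπ]
      rw [hkey]
      exact E2.add_v2 hmin hmul hE (V2.neg hmul (hcorr s (π' s))) (by omega)
    have hS' : ∀ s, π' s = s → E2 ord (S s s) (2 * (a₂ (castK s) : ℤ) + 2) := by
      intro s hs
      have hfix : π₂ (castK s) = castK s := (hπ'fix s).mp hs
      have hE := hS₂ (castK s) hfix
      rw [hSapp, sub_eq_add_neg]
      rw [← hAapp s s] at hE
      exact E2.add_v2 hmin hmul hE (V2.neg hmul (hcorrd s)) (by omega)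
    have hO' : ∀ s t, t ≠ s → t ≠ π' s → V2 ord (S s t) ((a₂ (castK s) : ℤ) + (a₂ (castK t) : ℤ) + 1) := by
      intro s t hts htπ
      have h1 : castK t ≠ castK s := by
        intro h
        exact hts (Fin.ext (by simpa [hcastval] using congrArg Fin.val h))
      have h2 : castK t ≠ π₂ (castK s) := by
        rw [← hembπ]
        intro h
        exact htπ (Fin.ext (by simpa [hcastval] using congrArg Fin.val h))
      have hA' := hO₂ (castK s) (castK t) h1 h2
      rw [← hAapp] at hA'
      rw [hSapp, sub_eq_add_neg]
      exact V2.add hmin hA' (V2.neg hmul ((hcorr s t).mono (by omega)))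
    have hpar' : ∀ s t, π' s = s → π' t = t → s ≠ t → a₂ (castK s) % 2 ≠ a₂ (castK t) % 2 := by
      intro s t hs ht hst
      exact hpar₂ (castK s) (castK t) ((hπ'fix s).mp hs) ((hπ'fix t).mp ht)
        (fun h => hst (Fin.ext (by simpa [hcastval] using congrArg Fin.val h)))
    have hSdet : S.det ≠ 0 :=
      IH k (by omega) S (fun s => a₂ (castK s)) π' hsym' hinv' hV' hD' hP' hS' hO' hpar'
    have hMdet : M.det = Dm.det * S.det := by
      rw [← Matrix.det_submatrix_equiv_self φ.symm M, ← hM₂, ← hdetN, hdet2, hSdef]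
    rw [hMdet]
    exact mul_ne_zero hdetD.1 hSdet

end GKAux


open GKAux


theorem corner_reduced (O : Subring F) (ord : F → ℤ)
    (hmul : ∀ x y : F, x ≠ 0 → y ≠ 0 → ord (x * y) = ord x + ord y)
    (hmin : ∀ x y : F, x ≠ 0 → y ≠ 0 → x + y ≠ 0 → min (ord x) (ord y) ≤ ord (x + y))
    (h2ne : (2 : F) ≠ 0) (h2ord : ord (2 : F) = 1)
    {n : ℕ} (B : Matrix (Fin n) (Fin n) F) (a : Fin n → ℕ) (σ : Fin n → Fin n)
    (hred : IsReducedForm O ord B a σ)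
    (off r : ℕ) (hr : off + r ≤ n)
    (emb : Fin r → Fin n) (hembv : ∀ t, (emb t : ℕ) = off + (t : ℕ))
    (hout : ∀ i : Fin r, ¬ (off ≤ ((σ (emb i)) : ℕ) ∧ ((σ (emb i)) : ℕ) < off + r) →
        a (emb i) < a (σ (emb i)))
    (heq : ∀ i : Fin r, off ≤ ((σ (emb i)) : ℕ) → ((σ (emb i)) : ℕ) < off + r →
        a (σ (emb i)) = a (emb i))
    (hval : ∀ i : Fin r, a (emb i) ≤ 1) :
    ∃ σ' : Fin r → Fin r,
      IsReducedForm O ord (B.submatrix emb emb) (fun t => a (emb t)) σ' := by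
  obtain ⟨hHI, hdetB, hInS, hAdm, hcross, hdiag, hoff⟩ := hred
  obtain ⟨hsymB, hdiagO, h2O⟩ := hHI
  obtain ⟨hmono, hdInS, hcInS⟩ := hInS
  obtain ⟨hamono, hinvσ, hP0c, hP0p, hmax, hPp, hPm, hm1, hm2⟩ := hAdm
  classical
  have hembinj : Function.Injective emb := by
    intro i j h
    have := congrArg Fin.val h
    rw [hembv, hembv] at this
    exact Fin.ext (by omega)
  set inC : Fin n → Prop := fun t => off ≤ (t : ℕ) ∧ (t : ℕ) < off + r with hinC
  have hembC : ∀ i : Fin r, inC (emb i) := by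
    intro i
    have := i.isLt
    rw [hinC]
    constructor <;> (rw [hembv]) <;> omega
  set σ' : Fin r → Fin r := fun i =>
    if h : inC (σ (emb i)) then ⟨(σ (emb i) : ℕ) - off, by
      have := h.1; have := h.2; omega⟩ else i with hσ'
  have hσ'C : ∀ i (h : inC (σ (emb i))), emb (σ' i) = σ (emb i) := by
    intro i h
    apply Fin.ext
    rw [hσ']
    simp only [dif_pos h]
    rw [hembv]
    have := h.1
    simp
    omega
  have hσ'nC : ∀ i, ¬ inC (σ (emb i)) → σ' i = i := by
    intro i h
    rw [hσ']
    simp only [dif_neg h]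
  have hσ'inv : ∀ i, σ' (σ' i) = i := by
    intro i
    by_cases h : inC (σ (emb i))
    · have h1 : emb (σ' i) = σ (emb i) := hσ'C i h
      have h2 : σ (emb (σ' i)) = emb i := by rw [h1, hinvσ]
      have h3 : inC (σ (emb (σ' i))) := by rw [h2]; exact hembC i
      have h4 := hσ'C (σ' i) h3
      apply hembinj
      rw [h4, h2]
    · rw [hσ'nC i h, hσ'nC i h]
  have hfixcase : ∀ i, σ' i = i → (σ (emb i) = emb i ∨ a (emb i) < a (σ (emb i))) := by
    intro i hi
    by_cases h : inC (σ (emb i))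
    · left
      have := hσ'C i h
      rw [hi] at this
      exact this.symm
    · right
      exact hout i h
  have hpairC : ∀ i, σ' i ≠ i → inC (σ (emb i)) ∧ σ (emb i) ≠ emb i := by
    intro i hi
    by_cases h : inC (σ (emb i))
    · refine ⟨h, ?_⟩
      intro hc
      apply hi
      apply hembinj
      rw [hσ'C i h, hc]
    · exact absurd (hσ'nC i h) hi
  have hpair_emb : ∀ i, σ' i ≠ i → emb (σ' i) = σ (emb i) := by
    intro i hi
    exact hσ'C i (hpairC i hi).1
  have hpair_a : ∀ i, σ' i ≠ i → a (emb (σ' i)) = a (emb i) := by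
    intro i hi
    rw [hpair_emb i hi]
    exact heq i (hpairC i hi).1.1 (hpairC i hi).1.2
  have hspec_unique : ∀ i j, σ' i = i → σ' j = j → a (emb i) = a (emb j) → i = j := by
    intro i j hi hj hij
    apply hembinj
    refine hPm (emb i) (emb j) hij ?_ ?_
    · rcases hfixcase i hi with h | h
      · exact Or.inr h
      · exact Or.inl h
    · rcases hfixcase j hj with h | h
      · exact Or.inr h
      · exact Or.inl h
  have hoffemb : ∀ i j : Fin r, j ≠ i → j ≠ σ' i →
      emb j ≠ emb i ∧ emb j ≠ σ (emb i) := by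
    intro i j hji hjσ
    refine ⟨fun h => hji (hembinj h), ?_⟩
    intro h
    by_cases hc : inC (σ (emb i))
    · apply hjσ
      apply hembinj
      rw [h, hσ'C i hc]
    · apply hc
      rw [← h]
      exact hembC j
  -- nondegeneracy of the corner via the key determinant lemma
  have hdetC : (B.submatrix emb emb).det ≠ 0 := by
    have hkey := GKAux.det_ne_zero (ord := ord) hmul hmin h2ne h2ord r
      ((2 : F) • B.submatrix emb emb) (fun t => a (emb t)) σ'
      (by intro i j
          simp only [Matrix.smul_apply, Matrix.submatrix_apply, smul_eq_mul]
          have h : B (emb i) (emb j) = B (emb j) (emb i) := hsymB.apply (emb j) (emb i)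
          rw [h])
      hσ'inv
      (by intro i j
          beta_reduce
          simp only [Matrix.smul_apply, Matrix.submatrix_apply, smul_eq_mul]
          exact hcInS (emb i) (emb j))
      (by intro i
          beta_reduce
          simp only [Matrix.smul_apply, Matrix.submatrix_apply, smul_eq_mul]
          rcases hdInS (emb i) with h | h
          · exact Or.inl (by rw [h, mul_zero])
          · by_cases h0 : B (emb i) (emb i) = 0
            · exact Or.inl (by rw [h0, mul_zero])
            · right
              rw [hmul 2 _ h2ne h0, h2ord]
              omega)
      (by intro i hi
          beta_reduce
          simp only [Matrix.smul_apply, Matrix.submatrix_apply, smul_eq_mul]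
          rw [hpair_emb i hi]
          have hne : σ (emb i) ≠ emb i := (hpairC i hi).2
          exact hcross (emb i) hne)
      (by intro i hi
          beta_reduce
          simp only [Matrix.smul_apply, Matrix.submatrix_apply, smul_eq_mul]
          have := hdiag (emb i) (hfixcase i hi)
          refine ⟨mul_ne_zero h2ne this.1, ?_⟩
          rw [hmul 2 _ h2ne this.1, h2ord, this.2]
          ring)
      (by intro i j hji hjσ
          beta_reduce
          simp only [Matrix.smul_apply, Matrix.submatrix_apply, smul_eq_mul]
          have h := hoff (emb i) (emb j) (hoffemb i j hji hjσ).1 (hoffemb i j hji hjσ).2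
          rcases h with h | h
          · exact Or.inl h
          · exact Or.inr (by omega))
      (by intro i j hi hj hij
          beta_reduce
          have h1 := hval i
          have h2 := hval j
          have h3 : a (emb i) ≠ a (emb j) := fun h => hij (hspec_unique i j hi hj h)
          omega)
    intro h
    apply hkey
    rw [Matrix.det_smul, h, mul_zero]
  refine ⟨σ', ?_, hdetC, ?_, ?_, ?_, ?_, ?_⟩
  · -- HalfIntegral
    refine ⟨?_, fun i => hdiagO (emb i), fun i j => h2O (emb i) (emb j)⟩
    ext i j
    simp only [Matrix.transpose_apply, Matrix.submatrix_apply]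
    exact hsymB.apply (emb i) (emb j)
  · -- InS
    refine ⟨?_, fun i => hdInS (emb i), fun i j => hcInS (emb i) (emb j)⟩
    intro i j hij
    beta_reduce
    apply hmono
    rw [Fin.le_def, hembv, hembv]
    rw [Fin.le_def] at hij
    omega
  · -- IsAdmissible
    have hmono' : Monotone fun t => a (emb t) := by
      intro i j hij
      beta_reduce
      apply hmono
      rw [Fin.le_def, hembv, hembv]
      rw [Fin.le_def] at hij
      omega
    have hnoP : ∀ i : Fin r, ¬ a (emb (σ' i)) < a (emb i) := by
      intro i h
      by_cases hi : σ' i = i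
      · rw [hi] at h; omega
      · rw [hpair_a i hi] at h; omega
    refine ⟨hmono', hσ'inv, ?_, ?_, ?_, ?_, ?_, ?_, ?_⟩
    · intro i j kk hi hj hk
      by_cases h1 : a (emb i) = a (emb j)
      · exact Or.inl (hspec_unique i j hi hj h1)
      · by_cases h2 : a (emb i) = a (emb kk)
        · exact Or.inr (Or.inl (hspec_unique i kk hi hk h2))
        · have := hval i; have := hval j; have := hval kk
          have h3 : a (emb j) = a (emb kk) := by omega
          exact Or.inr (Or.inr (hspec_unique j kk hj hk h3))
    · intro i j hi hj hij
      beta_reduce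
      have h1 := hval i
      have h2 := hval j
      have h3 : a (emb i) ≠ a (emb j) := fun h => hij (hspec_unique i j hi hj h)
      omega
    · intro i hi j hj hparj
      beta_reduce
      beta_reduce at hparj
      have h1 := hval i
      have h2 := hval j
      omega
    · intro i j _ h2 _
      beta_reduce at h2
      exact absurd h2 (hnoP i)
    · intro i j haij hi hj
      beta_reduce at haij hi hj
      have hi' : σ' i = i := by
        rcases hi with h | h
        · exact absurd h (by
            intro hc
            by_cases hfix : σ' i = i
            · rw [hfix] at hc; omega
            · rw [hpair_a i hfix] at hc; omega)
        · exact h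
      have hj' : σ' j = j := by
        rcases hj with h | h
        · exact absurd h (by
            intro hc
            by_cases hfix : σ' j = j
            · rw [hfix] at hc; omega
            · rw [hpair_a j hfix] at hc; omega)
        · exact h
      exact hspec_unique i j hi' hj' haij
    · intro i hi
      beta_reduce at hi
      exfalso
      by_cases hfix : σ' i = i
      · rw [hfix] at hi; omega
      · rw [hpair_a i hfix] at hi; omega
    · intro i hi
      beta_reduce at hi
      exact absurd hi (hnoP i)
  · -- cross-term exactness
    intro i hi
    beta_reduce
    rw [Matrix.submatrix_apply, hpair_emb i hi]
    exact hcross (emb i) (hpairC i hi).2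
  · -- diagonal exactness
    intro i hi
    beta_reduce
    beta_reduce at hi
    rw [Matrix.submatrix_apply]
    have hi' : σ' i = i := by
      rcases hi with h | h
      · exact h
      · exfalso
        by_cases hfix : σ' i = i
        · rw [hfix] at h; omega
        · rw [hpair_a i hfix] at h; omega
    exact hdiag (emb i) (hfixcase i hi')
  · -- off-type entries
    intro i j hji hjσ
    beta_reduce
    rw [Matrix.submatrix_apply]
    exact hoff (emb i) (emb j) (hoffemb i j hji hjσ).1 (hoffemb i j hji hjσ).2

set_option maxHeartbeats 1600000 in
/-- Block structure of a reduced form representing `(L ∩ 2^i L♯, 2^{-i}Q)`. -/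
theorem statement7 {F : Type} [Field F] (O : Subring F) (ord : F → ℤ) (q : ℕ)
    (hF : LocalFieldAxioms O ord 2 q) (hunram : ord (2 : F) = 1)
    {n : ℕ} (B : Matrix (Fin n) (Fin n) F)
    (hBhi : HalfIntegral O B) (hBnd : B.det ≠ 0)
    (i : ℤ) (hi : HasJordanComponent O ord (2 : F) B i)
    (Bi : Matrix (Fin n) (Fin n) F) (a : Fin n → ℕ) (σ : Fin n → Fin n)
    (hGram : IsGramOfDualCap O (2 : F) B i Bi)
    (hred : IsReducedForm O ord Bi a σ)
    (l m k : ℕ) (hn : n = l + m + k)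
    (h0 : ∀ t : Fin n, a t = 0 ↔ (t : ℕ) < l)
    (h1 : ∀ t : Fin n, a t = 1 ↔ (l ≤ (t : ℕ) ∧ (t : ℕ) < l + m)) :
    (∃ σ0 : Fin l → Fin l,
      IsReducedForm O ord (leadBlock Bi l (by omega)) (fun _ => 0) σ0) ∧
    (∃ σ1 : Fin m → Fin m,
      IsReducedForm O ord
        (Bi.submatrix (fun t : Fin m => (⟨l + (t : ℕ), by omega⟩ : Fin n))
          (fun t : Fin m => (⟨l + (t : ℕ), by omega⟩ : Fin n)))
        (fun _ => 1) σ1) ∧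
    (∃ (a' : Fin (l + m) → ℕ) (σ' : Fin (l + m) → Fin (l + m)),
      IsReducedForm O ord (leadBlock Bi (l + m) (by omega)) a' σ' ∧ ∀ t, a' t ≤ 1) ∧
    ∀ c : Fin k → ℕ,
      IsGK O ord
        (Bi.submatrix (fun t : Fin k => (⟨l + m + (t : ℕ), by omega⟩ : Fin n))
          (fun t : Fin k => (⟨l + m + (t : ℕ), by omega⟩ : Fin n))) c →
      ∀ t, 2 ≤ c t := by
  classical
  have hmul := hF.ord_mul
  have hmin := hF.min_le_ord_add
  have hCZ : CharZero F := hF.charZero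
  have h2ne : (2 : F) ≠ 0 := by
    have : ((2 : ℕ) : F) ≠ 0 := Nat.cast_ne_zero.mpr (by norm_num)
    simpa using this
  have hσinv : ∀ t, σ (σ t) = t := hred.2.2.2.1.2.1
  have hc8 : ∀ t : Fin n, a t < a (σ t) → a (σ t) % 2 = a t % 2 :=
    fun t ht => (hred.2.2.2.1.2.2.2.2.2.2.2.1 t ht).1
  -- value facts
  have hv0 : ∀ t : Fin n, (t : ℕ) < l → a t = 0 := fun t ht => (h0 t).mpr ht
  have hv1 : ∀ t : Fin n, l ≤ (t : ℕ) → (t : ℕ) < l + m → a t = 1 :=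
    fun t ht ht' => (h1 t).mpr ⟨ht, ht'⟩
  have hv2 : ∀ t : Fin n, l + m ≤ (t : ℕ) → 2 ≤ a t := by
    intro t ht
    have hn0 : a t ≠ 0 := fun h => by have := (h0 t).mp h; omega
    have hn1 : a t ≠ 1 := fun h => by have := (h1 t).mp h; omega
    omega
  have hpar01 : ∀ t : Fin n, a t = 1 → a (σ t) ≠ 0 := by
    intro t h1t hc
    have hlt : a (σ t) < a (σ (σ t)) := by rw [hσinv]; omega
    have hp := hc8 (σ t) hlt
    rw [hσinv] at hp
    omega
  have heq01 : ∀ t : Fin n, a t ≤ 1 → a (σ t) ≤ 1 → a (σ t) = a t := by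
    intro t hat haσ
    rcases lt_trichotomy (a (σ t)) (a t) with h | h | h
    · exfalso
      have hp := hc8 (σ t) (by rw [hσinv]; exact h)
      rw [hσinv] at hp
      omega
    · exact h
    · exfalso
      have hp := hc8 t h
      omega
  refine ⟨?_, ?_, ?_, ?_⟩
  · -- corner of GK entries 0
    have hcorner := corner_reduced O ord hmul hmin h2ne hunram Bi a σ hred 0 l
      (by omega) (Fin.castLE (by omega))
      (by intro t; simp)
      (by intro t hni
          have hval : a (Fin.castLE (by omega : l ≤ n) t) = 0 :=
            hv0 _ (by show (t : ℕ) < l; exact t.isLt)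
          have hne0 : a (σ (Fin.castLE (by omega : l ≤ n) t)) ≠ 0 := by
            intro hc
            have := (h0 _).mp hc
            exact hni (by omega)
          omega)
      (by intro t hge hlt
          have hval : a (Fin.castLE (by omega : l ≤ n) t) = 0 :=
            hv0 _ (by show (t : ℕ) < l; exact t.isLt)
          have : a (σ (Fin.castLE (by omega : l ≤ n) t)) = 0 := hv0 _ (by omega)
          omega)
      (by intro t
          have : a (Fin.castLE (by omega : l ≤ n) t) = 0 :=
            hv0 _ (by show (t : ℕ) < l; exact t.isLt)
          omega)
    obtain ⟨σ0, hσ0⟩ := hcorner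
    have hfun : (fun t : Fin l => a (Fin.castLE (by omega : l ≤ n) t)) =
        (fun _ : Fin l => 0) := by
      funext t
      exact hv0 _ (by show (t : ℕ) < l; exact t.isLt)
    rw [hfun] at hσ0
    exact ⟨σ0, hσ0⟩
  · -- corner of GK entries 1
    have hcorner := corner_reduced O ord hmul hmin h2ne hunram Bi a σ hred l m
      (by omega) (fun t : Fin m => (⟨l + (t : ℕ), by omega⟩ : Fin n))
      (by intro t; simp)
      (by intro t hni
          beta_reduce at hni ⊢
          have hval : a (⟨l + (t : ℕ), by omega⟩ : Fin n) = 1 :=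
            hv1 _ (by show l ≤ l + (t : ℕ); omega)
              (by show l + (t : ℕ) < l + m; have := t.isLt; omega)
          have hne1 : a (σ (⟨l + (t : ℕ), by omega⟩ : Fin n)) ≠ 1 := by
            intro hc
            have := (h1 _).mp hc
            exact hni (by omega)
          have hne0 := hpar01 _ hval
          omega)
      (by intro t hge hlt
          beta_reduce at hge hlt ⊢
          have hval : a (⟨l + (t : ℕ), by omega⟩ : Fin n) = 1 :=
            hv1 _ (by show l ≤ l + (t : ℕ); omega)
              (by show l + (t : ℕ) < l + m; have := t.isLt; omega)
          have : a (σ (⟨l + (t : ℕ), by omega⟩ : Fin n)) = 1 := hv1 _ (by omega) (by omega)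
          omega)
      (by intro t
          beta_reduce
          have : a (⟨l + (t : ℕ), by omega⟩ : Fin n) = 1 :=
            hv1 _ (by show l ≤ l + (t : ℕ); omega)
              (by show l + (t : ℕ) < l + m; have := t.isLt; omega)
          omega)
    obtain ⟨σ1, hσ1⟩ := hcorner
    have hfun : (fun t : Fin m => a (⟨l + (t : ℕ), by omega⟩ : Fin n)) =
        (fun _ : Fin m => 1) := by
      funext t
      exact hv1 _ (by show l ≤ l + (t : ℕ); omega)
        (by show l + (t : ℕ) < l + m; have := t.isLt; omega)
    rw [hfun] at hσ1
    exact ⟨σ1, hσ1⟩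
  · -- corner of GK entries ≤ 1
    have hcorner := corner_reduced O ord hmul hmin h2ne hunram Bi a σ hred 0 (l + m)
      (by omega) (Fin.castLE (by omega))
      (by intro t; simp)
      (by intro t hni
          have hle : a (Fin.castLE (by omega : l + m ≤ n) t) ≤ 1 := by
            rcases Nat.lt_or_ge ((t : ℕ)) l with h | h
            · have := hv0 (Fin.castLE (by omega : l + m ≤ n) t)
                (by show (t : ℕ) < l; omega)
              omega
            · have := hv1 (Fin.castLE (by omega : l + m ≤ n) t)
                (by show l ≤ (t : ℕ); omega)
                (by show (t : ℕ) < l + m; exact t.isLt)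
              omega
          have : 2 ≤ a (σ (Fin.castLE (by omega : l + m ≤ n) t)) := hv2 _ (by omega)
          omega)
      (by intro t hge hlt
          have hle : a (Fin.castLE (by omega : l + m ≤ n) t) ≤ 1 := by
            rcases Nat.lt_or_ge ((t : ℕ)) l with h | h
            · have := hv0 (Fin.castLE (by omega : l + m ≤ n) t)
                (by show (t : ℕ) < l; omega)
              omega
            · have := hv1 (Fin.castLE (by omega : l + m ≤ n) t)
                (by show l ≤ (t : ℕ); omega)
                (by show (t : ℕ) < l + m; exact t.isLt)
              omega
          have hleσ : a (σ (Fin.castLE (by omega : l + m ≤ n) t)) ≤ 1 := by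
            rcases Nat.lt_or_ge ((σ (Fin.castLE (by omega : l + m ≤ n) t) : ℕ)) l with h | h
            · have := hv0 _ h
              omega
            · have := hv1 (σ (Fin.castLE (by omega : l + m ≤ n) t)) h (by omega)
              omega
          exact heq01 _ hle hleσ)
      (by intro t
          rcases Nat.lt_or_ge ((t : ℕ)) l with h | h
          · have := hv0 (Fin.castLE (by omega : l + m ≤ n) t)
              (by show (t : ℕ) < l; omega)
            omega
          · have := hv1 (Fin.castLE (by omega : l + m ≤ n) t)
              (by show l ≤ (t : ℕ); omega)
              (by show (t : ℕ) < l + m; exact t.isLt)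
            omega)
    obtain ⟨σ', hσ'⟩ := hcorner
    refine ⟨fun t => a (Fin.castLE (by omega : l + m ≤ n) t), σ', hσ', ?_⟩
    intro t
    beta_reduce
    rcases Nat.lt_or_ge ((t : ℕ)) l with h | h
    · have := hv0 (Fin.castLE (by omega : l + m ≤ n) t)
        (by show (t : ℕ) < l; omega)
      omega
    · have := hv1 (Fin.castLE (by omega : l + m ≤ n) t)
        (by show l ≤ (t : ℕ); omega)
        (by show (t : ℕ) < l + m; exact t.isLt)
      omega
  · -- tail block: all GK entries at least 2
    intro c hGK t
    set emb3 : Fin k → Fin n := fun t => (⟨l + m + (t : ℕ), by omega⟩ : Fin n) with hemb3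
    set M := Bi.submatrix emb3 emb3 with hM
    have hdInS := hred.2.2.1.2.1
    have hcInS := hred.2.2.1.2.2
    have haemb : ∀ s : Fin k, 2 ≤ a (emb3 s) := by
      intro s
      apply hv2
      simp [hemb3]
    have hmem : (fun _ : Fin k => 2) ∈ GKSet O ord M := by
      refine ⟨M, ⟨1, ⟨?_, ?_, ?_⟩, ?_⟩, ?_, ?_, ?_⟩
      · intro s t'
        by_cases h : s = t'
        · rw [h, Matrix.one_apply_eq]; exact O.one_mem
        · rw [Matrix.one_apply_ne h]; exact O.zero_mem
      · rw [Matrix.det_one]; exact one_ne_zero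
      · rw [Matrix.det_one]; exact GKAux.ord_one hmul
      · rw [Matrix.transpose_one, Matrix.one_mul, Matrix.mul_one]
      · exact monotone_const
      · intro s
        rcases hdInS (emb3 s) with h | h
        · exact Or.inl h
        · right
          have := haemb s
          simp only [hM, Matrix.submatrix_apply]
          omega
      · intro s t'
        rcases hcInS (emb3 s) (emb3 t') with h | h
        · exact Or.inl h
        · right
          have := haemb s
          have := haemb t'
          simp only [hM, Matrix.submatrix_apply]
          omega
    have hle := hGK.2 (fun _ => 2) hmem
    obtain ⟨B', _, hInSc⟩ := hGK.1
    have hmc : Monotone c := hInSc.1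
    rcases hle with h | ⟨k0, hbefore, hlt⟩
    · exact le_of_eq (congrFun h t)
    · rcases lt_or_ge t k0 with h | h
      · exact le_of_eq (hbefore t h)
      · have h2' : (2 : ℕ) < c k0 := hlt
        have := hmc h
        omega


end GK
end
end

section
/- Let F be a finite extension of ℚ₂ with ring of integers 𝔬, maximal ideal 𝔭, residue cardinality q, and ramification index e over ℚ₂. For an integer f, the index of the subgroup 𝔬^{×2}·(1 + 𝔭^f) in 𝔬^× is: [𝔬^× : 𝔬^{×2}(1+𝔭^f)] = q^{⌊f/2⌋} if 0 < f ≤ 2e, and [𝔬^× : 𝔬^{×2}(1+𝔭^f)] = 2q^e if f > 2e. -/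
open scoped Classical

noncomputable section

namespace GK

variable {F : Type} [Field F]

section Aux12
variable {O : Subring F} {ord : F → ℤ} {q : ℕ}

/-- `x = 0` or `ord x ≥ n`. -/
def Vp (ord : F → ℤ) (n : ℤ) (x : F) : Prop := x = 0 ∨ n ≤ ord x

theorem ord_one (hF : LocalFieldAxioms O ord 2 q) : ord (1 : F) = 0 := by
  have h := hF.ord_mul 1 1 one_ne_zero one_ne_zero
  simp at h; omega

theorem ord_neg_one (hF : LocalFieldAxioms O ord 2 q) : ord (-1 : F) = 0 := by
  have h := hF.ord_mul (-1) (-1) (by norm_num) (by norm_num)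
  have h1 := ord_one hF
  simp at h; omega

theorem ord_neg (hF : LocalFieldAxioms O ord 2 q) {x : F} (hx : x ≠ 0) :
    ord (-x) = ord x := by
  have h := hF.ord_mul (-1) x (by norm_num) hx
  have h1 := ord_neg_one hF
  simp at h; omega

theorem ord_inv (hF : LocalFieldAxioms O ord 2 q) {x : F} (hx : x ≠ 0) :
    ord x⁻¹ = -ord x := by
  have h := hF.ord_mul x x⁻¹ hx (inv_ne_zero hx)
  rw [mul_inv_cancel₀ hx, ord_one hF] at h; omega

theorem ord_pow (hF : LocalFieldAxioms O ord 2 q) {x : F} (hx : x ≠ 0) (n : ℕ) :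
    ord (x ^ n) = n * ord x := by
  induction n with
  | zero => simpa using ord_one hF
  | succ k ih =>
    rw [pow_succ, hF.ord_mul _ _ (pow_ne_zero _ hx) hx, ih]; push_cast; ring

theorem Vp.mono {n m : ℤ} {x : F} (h : Vp ord n x) (hmn : m ≤ n) : Vp ord m x :=
  h.imp id fun h' => le_trans hmn h'

theorem Vp.neg (hF : LocalFieldAxioms O ord 2 q) {n : ℤ} {x : F} (h : Vp ord n x) :
    Vp ord n (-x) := by
  by_cases hx : x = 0
  · left; simp [hx]
  · rcases h with h | h
    · exact absurd h hx
    · right; rwa [ord_neg hF hx]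

theorem Vp.add (hF : LocalFieldAxioms O ord 2 q) {n : ℤ} {x y : F}
    (hx : Vp ord n x) (hy : Vp ord n y) : Vp ord n (x + y) := by
  by_cases hx0 : x = 0
  · simpa [hx0] using hy
  by_cases hy0 : y = 0
  · simpa [hy0] using hx
  by_cases hxy : x + y = 0
  · exact Or.inl hxy
  right
  have := hF.min_le_ord_add x y hx0 hy0 hxy
  rcases hx with h | h; · exact absurd h hx0
  rcases hy with h' | h'; · exact absurd h' hy0
  have : min (ord x) (ord y) ≤ ord (x + y) := this
  rcases le_total (ord x) (ord y) with hc | hc <;> simp [min_eq_left, min_eq_right, hc] at this <;> omega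

theorem Vp.mul (hF : LocalFieldAxioms O ord 2 q) {n m : ℤ} {x y : F}
    (hx : Vp ord n x) (hy : Vp ord m y) : Vp ord (n + m) (x * y) := by
  by_cases hx0 : x = 0
  · left; simp [hx0]
  by_cases hy0 : y = 0
  · left; simp [hy0]
  rcases hx with h | h; · exact absurd h hx0
  rcases hy with h' | h'; · exact absurd h' hy0
  right; rw [hF.ord_mul x y hx0 hy0]; omega

theorem Vp.sum (hF : LocalFieldAxioms O ord 2 q) {n : ℤ} {ι : Type} (s : Finset ι)
    (g : ι → F) (h : ∀ i ∈ s, Vp ord n (g i)) : Vp ord n (∑ i ∈ s, g i) :=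
  Finset.sum_induction g (Vp ord n) (fun _ _ ha hb => Vp.add hF ha hb) (Or.inl rfl) h

theorem mem_O_iff_Vp (hF : LocalFieldAxioms O ord 2 q) {x : F} : x ∈ O ↔ Vp ord 0 x :=
  hF.mem_integers x

theorem ord_nonneg (hF : LocalFieldAxioms O ord 2 q) {x : F} (hx : x ∈ O) (h0 : x ≠ 0) :
    0 ≤ ord x := ((hF.mem_integers x).1 hx).resolve_left h0

/-- strict triangle equality -/
theorem ord_add_of_lt (hF : LocalFieldAxioms O ord 2 q) {x y : F} (hx : x ≠ 0)
    (hy : Vp ord (ord x + 1) y) : x + y ≠ 0 ∧ ord (x + y) = ord x := by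
  by_cases hy0 : y = 0
  · simp [hy0, hx]
  have hylt : ord x < ord y := by
    rcases hy with h | h
    · exact absurd h hy0
    · omega
  have hxy : x + y ≠ 0 := by
    intro h
    have hyx : y = -x := by linear_combination h
    rw [hyx, ord_neg hF hx] at hylt; omega
  constructor
  · exact hxy
  have h1 := hF.min_le_ord_add x y hx hy0 hxy
  have h2 := hF.min_le_ord_add (x + y) (-y) hxy (neg_ne_zero.2 hy0) (by simpa using hx)
  rw [ord_neg hF hy0] at h2
  simp only [add_neg_cancel_right] at h2
  rcases le_total (ord x) (ord y) with hc | hc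
  · rw [min_eq_left hc] at h1
    rcases le_total (ord (x+y)) (ord y) with hc2 | hc2
    · rw [min_eq_left hc2] at h2; omega
    · rw [min_eq_right hc2] at h2; omega
  · omega

theorem unit_coe_mul_inv (u : (↥O)ˣ) :
    ((u : ↥O) : F) * (((u⁻¹ : (↥O)ˣ) : ↥O) : F) = 1 := by
  have h1 : (u : ↥O) * ((u⁻¹ : (↥O)ˣ) : ↥O) = 1 := u.mul_inv
  exact_mod_cast congrArg (fun z : ↥O => (z : F)) h1

theorem unit_coe_ne_zero {u : (↥O)ˣ} : ((u : ↥O) : F) ≠ 0 := by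
  have h := unit_coe_mul_inv (u := u)
  exact left_ne_zero_of_mul_eq_one h

theorem unit_coe_mem {u : (↥O)ˣ} : ((u : ↥O) : F) ∈ O := (u : ↥O).2

theorem unit_ord_zero (hF : LocalFieldAxioms O ord 2 q) (u : (↥O)ˣ) :
    ord ((u : ↥O) : F) = 0 := by
  have h := unit_coe_mul_inv (u := u)
  have h1 := hF.ord_mul _ _ (unit_coe_ne_zero (u := u)) (unit_coe_ne_zero (u := u⁻¹))
  rw [h, ord_one hF] at h1
  have h2 := ord_nonneg hF (unit_coe_mem (u := u)) (unit_coe_ne_zero (u := u))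
  have h3 := ord_nonneg hF (unit_coe_mem (u := u⁻¹)) (unit_coe_ne_zero (u := u⁻¹))
  omega

theorem unit_coe_inv (u : (↥O)ˣ) : (((u⁻¹ : (↥O)ˣ) : ↥O) : F) = (((u : ↥O) : F))⁻¹ := by
  have h := unit_coe_mul_inv (u := u)
  exact (inv_eq_of_mul_eq_one_right h).symm

/-- build a unit of `O` from an element of valuation zero. -/
def mkUnit (hF : LocalFieldAxioms O ord 2 q) (x : F) (hx : x ∈ O) (h0 : x ≠ 0)
    (hord : ord x = 0) : (↥O)ˣ where
  val := ⟨x, hx⟩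
  inv := ⟨x⁻¹, (hF.mem_integers x⁻¹).2 (Or.inr (by rw [ord_inv hF h0, hord, neg_zero]))⟩
  val_inv := Subtype.ext (mul_inv_cancel₀ h0)
  inv_val := Subtype.ext (inv_mul_cancel₀ h0)

@[simp] theorem mkUnit_coe (hF : LocalFieldAxioms O ord 2 q) (x : F) (hx : x ∈ O)
    (h0 : x ≠ 0) (hord : ord x = 0) : (((mkUnit hF x hx h0 hord : (↥O)ˣ) : ↥O) : F) = x := rfl

/-- multiplication by an element of valuation `0` preserves `Vp`. -/
theorem Vp.mul_unit_iff (hF : LocalFieldAxioms O ord 2 q) {n : ℤ} {x z : F} (hz0 : z ≠ 0)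
    (hz : ord z = 0) : Vp ord n (x * z) ↔ Vp ord n x := by
  constructor
  · intro h
    have := Vp.mul hF h (Or.inr (le_of_eq (ord_inv hF hz0).symm) : Vp ord (-ord z) z⁻¹)
    rw [hz] at this
    simpa [mul_assoc, mul_inv_cancel₀ hz0] using this
  · intro h
    have := Vp.mul hF h (Or.inr (le_of_eq hz.symm) : Vp ord 0 z)
    simpa using this

/-- the congruence subgroup `1 + 𝔭^m` inside `(↥O)ˣ`. -/
def UU (hF : LocalFieldAxioms O ord 2 q) (m : ℕ) : Subgroup (↥O)ˣ where
  carrier := {u : (↥O)ˣ | Vp ord m (((u : ↥O) : F) - 1)}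
  one_mem' := Or.inl (by push_cast; ring)
  mul_mem' := by
    intro a b ha hb
    have key : (((a * b : (↥O)ˣ) : ↥O) : F) - 1 =
        ((((a : ↥O) : F)) - 1) * ((((b : ↥O) : F)) - 1) + ((((a : ↥O) : F)) - 1)
          + ((((b : ↥O) : F)) - 1) := by push_cast; ring
    show Vp ord m _
    rw [key]
    refine Vp.add hF (Vp.add hF ?_ ha) hb
    have hbO : Vp ord 0 ((((b : ↥O) : F)) - 1) := by
      rw [← mem_O_iff_Vp hF]
      exact sub_mem unit_coe_mem (one_mem O)
    simpa using Vp.mul hF ha hbO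
  inv_mem' := by
    intro a ha
    have key : (((a⁻¹ : (↥O)ˣ) : ↥O) : F) - 1 =
        -(((((a : ↥O) : F)) - 1) * (((a : ↥O) : F))⁻¹) := by
      rw [unit_coe_inv]
      field_simp
      ring
    show Vp ord m _
    rw [key]
    refine Vp.neg hF ?_
    have h2 : Vp ord 0 ((((a : ↥O) : F))⁻¹) :=
      Or.inr (le_of_eq (by rw [ord_inv hF unit_coe_ne_zero, unit_ord_zero hF, neg_zero]))
    simpa using Vp.mul hF ha h2

theorem mem_UU_iff (hF : LocalFieldAxioms O ord 2 q) {m : ℕ} {u : (↥O)ˣ} :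
    u ∈ UU hF m ↔ Vp ord m (((u : ↥O) : F) - 1) := Iff.rfl

theorem class_eq_iff (hF : LocalFieldAxioms O ord 2 q) {f : ℕ} (u w : (↥O)ˣ) :
    (QuotientGroup.mk u : (↥O)ˣ ⧸ UU hF f) = QuotientGroup.mk w ↔
      Vp ord f ((((w : ↥O) : F)) - (((u : ↥O) : F))) := by
  rw [QuotientGroup.eq, mem_UU_iff hF]
  have key : (((u⁻¹ * w : (↥O)ˣ) : ↥O) : F) - 1 =
      ((((w : ↥O) : F)) - (((u : ↥O) : F))) * (((u : ↥O) : F))⁻¹ := by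
    push_cast [unit_coe_inv]
    field_simp
  rw [key, Vp.mul_unit_iff hF (inv_ne_zero unit_coe_ne_zero)
    (by rw [ord_inv hF unit_coe_ne_zero, unit_ord_zero hF, neg_zero])]

/-- digit expansion of an integral element to precision `k`. -/
theorem digits_exist (hF : LocalFieldAxioms O ord 2 q) {π : F} (hπ0 : π ≠ 0)
    (hπ1 : ord π = 1) {S : Finset F} (hSrep : ∀ x : F, x ∈ O → ∃ y ∈ S,
      x - y = 0 ∨ 1 ≤ ord (x - y)) :
    ∀ (k : ℕ) (x : F), x ∈ O → ∃ c : Fin k → F, (∀ i, c i ∈ S) ∧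
      Vp ord k (x - ∑ i : Fin k, c i * π ^ (i : ℕ)) := by
  intro k
  induction k with
  | zero =>
    intro x hx
    exact ⟨Fin.elim0, fun i => i.elim0, by
      simpa using (mem_O_iff_Vp hF).1 hx⟩
  | succ k ih =>
    intro x hx
    obtain ⟨s, hsS, hs⟩ := hSrep x hx
    set y := (x - s) * π⁻¹ with hy
    have hxs : x - s = π * y := by
      rw [hy]; field_simp
    have hyO : y ∈ O := by
      rw [mem_O_iff_Vp hF]
      rcases hs with h | h
      · left; rw [hy, h, zero_mul]
      · by_cases h0 : x - s = 0
        · left; rw [hy, h0, zero_mul]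
        · right
          rw [hy, hF.ord_mul _ _ h0 (inv_ne_zero hπ0), ord_inv hF hπ0, hπ1]
          omega
    obtain ⟨c', hc'S, hc'⟩ := ih y hyO
    refine ⟨Fin.cons s c', ?_, ?_⟩
    · intro i
      refine Fin.cases ?_ ?_ i
      · simpa using hsS
      · intro j; simpa using hc'S j
    · have hsum : ∑ i : Fin (k+1), (Fin.cons s c' : Fin (k+1) → F) i * π ^ (i : ℕ)
          = s + π * ∑ i : Fin k, c' i * π ^ (i : ℕ) := by
        rw [Fin.sum_univ_succ]
        simp only [Fin.cons_zero, Fin.cons_succ, Fin.val_zero, pow_zero, mul_one,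
          Fin.val_succ, Finset.mul_sum]
        congr 1
        apply Finset.sum_congr rfl
        intro i _
        ring
      have key : x - ∑ i : Fin (k+1), (Fin.cons s c' : Fin (k+1) → F) i * π ^ (i : ℕ)
          = π * (y - ∑ i : Fin k, c' i * π ^ (i : ℕ)) := by
        rw [hsum, mul_sub, ← hxs]; ring
      rw [key]
      have := Vp.mul hF (Or.inr (le_of_eq hπ1.symm) : Vp ord 1 π) hc'
      have hcast : ((k+1 : ℕ) : ℤ) = 1 + (k : ℤ) := by push_cast; ring
      rw [hcast]
      exact this

/-- injectivity of digit expansions mod `𝔭^f`. -/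
theorem digits_inj (hF : LocalFieldAxioms O ord 2 q) {π : F} (hπ0 : π ≠ 0)
    (hπ1 : ord π = 1) {S : Finset F} (hSO : ∀ x ∈ S, x ∈ O)
    (hSsep : ∀ y ∈ S, ∀ z ∈ S, (y - z = 0 ∨ 1 ≤ ord (y - z)) → y = z)
    {m k f : ℕ} (hmk : m + k ≤ f) (c c' : Fin k → F)
    (hc : ∀ i, c i ∈ S) (hc' : ∀ i, c' i ∈ S)
    (h : Vp ord f (∑ i : Fin k, c i * π ^ (m + (i : ℕ)) -
      ∑ i : Fin k, c' i * π ^ (m + (i : ℕ)))) : c = c' := by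
  by_contra hne
  have hπpow : ∀ j : ℕ, π ^ j ≠ 0 ∧ ord (π ^ j) = j := fun j =>
    ⟨pow_ne_zero _ hπ0, by rw [ord_pow hF hπ0, hπ1]; ring⟩
  set d : Fin k → F := fun i => c i - c' i with hd
  have hdiff : ∑ i : Fin k, c i * π ^ (m + (i : ℕ)) - ∑ i : Fin k, c' i * π ^ (m + (i : ℕ))
      = ∑ i : Fin k, d i * π ^ (m + (i : ℕ)) := by
    rw [← Finset.sum_sub_distrib]
    apply Finset.sum_congr rfl
    intro i _; rw [hd]; ring
  have hT : ∃ i, c i ≠ c' i := Function.ne_iff.mp hne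
  set T : Finset (Fin k) := Finset.univ.filter (fun i => c i ≠ c' i) with hTdef
  have hTne : T.Nonempty := by
    obtain ⟨i, hi⟩ := hT
    exact ⟨i, by simp [hTdef, hi]⟩
  set i₀ := T.min' hTne with hi₀
  have hi₀T : i₀ ∈ T := T.min'_mem hTne
  have hi₀ne : c i₀ ≠ c' i₀ := by simpa [hTdef] using hi₀T
  have hd0 : d i₀ ≠ 0 := sub_ne_zero.2 hi₀ne
  have hdO : ∀ i, d i ∈ O := fun i => sub_mem (hSO _ (hc i)) (hSO _ (hc' i))
  have hdord : ord (d i₀) = 0 := by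
    have h1 : ¬ (c i₀ - c' i₀ = 0 ∨ 1 ≤ ord (c i₀ - c' i₀)) := fun hcon =>
      hi₀ne (hSsep _ (hc i₀) _ (hc' i₀) hcon)
    push_neg at h1
    have h2 : (0:ℤ) ≤ ord (c i₀ - c' i₀) :=
      ord_nonneg hF (sub_mem (hSO _ (hc i₀)) (hSO _ (hc' i₀))) (sub_ne_zero.2 hi₀ne)
    have := h1.2
    simp only [hd]; omega
  -- split the sum
  have hsplit : ∑ i : Fin k, d i * π ^ (m + (i : ℕ))
      = d i₀ * π ^ (m + (i₀ : ℕ)) + ∑ i ∈ Finset.univ.erase i₀, d i * π ^ (m + (i : ℕ)) := by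
    exact (Finset.add_sum_erase _ _ (Finset.mem_univ i₀)).symm
  have hrest : Vp ord ((m + (i₀ : ℕ) : ℕ) + 1)
      (∑ i ∈ Finset.univ.erase i₀, d i * π ^ (m + (i : ℕ))) := by
    refine Vp.sum hF _ _ ?_
    intro i hi
    by_cases hdi : d i = 0
    · exact Or.inl (by rw [hdi, zero_mul])
    · right
      have hiT : i ∈ T := by
        simp only [hTdef, Finset.mem_filter, Finset.mem_univ, true_and]
        exact fun hcc => hdi (by rw [hd]; simp [hcc])
      have hine : i ≠ i₀ := (Finset.mem_erase.1 hi).1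
      have hlt : i₀ < i := lt_of_le_of_ne (T.min'_le i hiT) (Ne.symm hine)
      have h1 := ord_nonneg hF (hdO i) hdi
      rw [hF.ord_mul _ _ hdi (hπpow _).1, (hπpow (m + (i:ℕ))).2]
      have : (i₀ : ℕ) + 1 ≤ (i : ℕ) := hlt
      push_cast
      omega
  have hlead : d i₀ * π ^ (m + (i₀ : ℕ)) ≠ 0 ∧
      ord (d i₀ * π ^ (m + (i₀ : ℕ))) = (m + (i₀ : ℕ) : ℕ) := by
    constructor
    · exact mul_ne_zero hd0 (hπpow _).1
    · rw [hF.ord_mul _ _ hd0 (hπpow _).1, hdord, (hπpow _).2]; omega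
  have := ord_add_of_lt hF hlead.1 (by rw [hlead.2]; exact hrest.mono (by push_cast; omega))
  rw [← hsplit] at this
  rw [hdiff] at h
  rcases h with h | h
  · exact this.1 h
  · rw [this.2] at h
    have : (i₀ : ℕ) < k := i₀.2
    omega

theorem two_ne_zero' (hF : LocalFieldAxioms O ord 2 q) : (2 : F) ≠ 0 := by
  haveI := hF.charZero
  exact two_ne_zero

theorem ord_two_pos (hF : LocalFieldAxioms O ord 2 q) : 0 < ord (2 : F) := by
  have := hF.ord_p_pos
  have h2 : ((2 : ℕ) : F) = (2 : F) := by norm_num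
  rwa [h2] at this

/-- squares of `1 + 𝔭^⌈f/2⌉` lie in `1 + 𝔭^f` when `f ≤ 2e`. -/
theorem sq_easy (hF : LocalFieldAxioms O ord 2 q) {e f : ℕ} (he : ord (2 : F) = e)
    (hf2 : f ≤ 2 * e) {x : F} (hx : Vp ord ((f+1)/2 : ℕ) (x - 1)) :
    Vp ord f (x * x - 1) := by
  have key : x * x - 1 = (x - 1) * (x - 1) + 2 * (x - 1) := by ring
  rw [key]
  refine Vp.add hF ?_ ?_
  · exact (Vp.mul hF hx hx).mono (by push_cast; omega)
  · exact (Vp.mul hF (Or.inr (le_of_eq he.symm) : Vp ord e (2 : F)) hx).mono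
      (by push_cast; omega)

/-- conversely, a unit whose square is `1` mod `𝔭^f` lies in `1 + 𝔭^⌈f/2⌉`, `f ≤ 2e`. -/
theorem ker_easy (hF : LocalFieldAxioms O ord 2 q) {e f : ℕ} (he : ord (2 : F) = e)
    (hf1 : 1 ≤ f) (hf2 : f ≤ 2 * e) {x : F} (hx0 : x ≠ 0) (hxO : x ∈ O)
    (h : Vp ord f (x * x - 1)) : Vp ord ((f+1)/2 : ℕ) (x - 1) := by
  by_cases h1 : x = 1
  · exact Or.inl (by rw [h1, sub_self])
  by_cases hm1 : x = -1
  · right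
    rw [hm1]
    have : (-1 : F) - 1 = -2 := by ring
    rw [this, ord_neg hF (two_ne_zero' hF), he]
    push_cast; omega
  have hx1 : x - 1 ≠ 0 := sub_ne_zero.2 h1
  have hxp1 : x + 1 ≠ 0 := fun hc => hm1 (by linear_combination hc)
  have ha : 0 ≤ ord (x - 1) := ord_nonneg hF (sub_mem hxO (one_mem O)) hx1
  by_contra hcon
  have hlt : ord (x - 1) < ((f+1)/2 : ℕ) := by
    rcases not_or.1 hcon with ⟨_, h2⟩
    omega
  -- then ord (x+1) = ord (x-1)
  have hbe : ord (x - 1) < (e : ℤ) := by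
    have : ((f+1)/2 : ℕ) ≤ e := by omega
    push_cast at hlt ⊢
    omega
  have h2 : Vp ord (ord (x - 1) + 1) (2 : F) := Or.inr (by rw [he]; omega)
  have hb := ord_add_of_lt hF hx1 h2
  have hxp1eq : x - 1 + 2 = x + 1 := by ring
  rw [hxp1eq] at hb
  have hmul : ord (x * x - 1) = ord (x - 1) + ord (x + 1) := by
    have : x * x - 1 = (x - 1) * (x + 1) := by ring
    rw [this, hF.ord_mul _ _ hx1 hxp1]
  rcases h with h | h
  · exact (mul_ne_zero hx1 hxp1) (by linear_combination h)
  · rw [hmul, hb.2] at h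
    push_cast at hlt h
    omega

/-- squares of `1 + 𝔭^(f-e)` lie in `1 + 𝔭^f` when `f > 2e`. -/
theorem sq_hard (hF : LocalFieldAxioms O ord 2 q) {e f : ℕ} (he : ord (2 : F) = e)
    (hf : 2 * e < f) {x : F} (hx : Vp ord ((f - e : ℕ)) (x - 1)) :
    Vp ord f (x * x - 1) := by
  have key : x * x - 1 = (x - 1) * (x - 1) + 2 * (x - 1) := by ring
  rw [key]
  refine Vp.add hF ?_ ?_
  · exact (Vp.mul hF hx hx).mono (by push_cast; omega)
  · exact (Vp.mul hF (Or.inr (le_of_eq he.symm) : Vp ord e (2 : F)) hx).mono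
      (by push_cast; omega)

/-- when `f > 2e`, a square root of `1` mod `𝔭^f` is `±1` mod `𝔭^(f-e)`. -/
theorem ker_hard (hF : LocalFieldAxioms O ord 2 q) {e f : ℕ} (he : ord (2 : F) = e)
    (hf : 2 * e < f) {x : F} (hx0 : x ≠ 0) (hxO : x ∈ O)
    (h : Vp ord f (x * x - 1)) :
    Vp ord ((f - e : ℕ)) (x - 1) ∨ Vp ord ((f - e : ℕ)) (x + 1) := by
  by_cases h1 : x = 1
  · exact Or.inl (Or.inl (by rw [h1, sub_self]))
  by_cases hm1 : x = -1
  · exact Or.inr (Or.inl (by rw [hm1]; ring))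
  have hx1 : x - 1 ≠ 0 := sub_ne_zero.2 h1
  have hxp1 : x + 1 ≠ 0 := fun hc => hm1 (by linear_combination hc)
  have ha : 0 ≤ ord (x - 1) := ord_nonneg hF (sub_mem hxO (one_mem O)) hx1
  have hb : 0 ≤ ord (x + 1) := ord_nonneg hF (add_mem hxO (one_mem O)) hxp1
  have hmul : ord (x - 1) + ord (x + 1) ≥ (f : ℤ) := by
    have hkey : x * x - 1 = (x - 1) * (x + 1) := by ring
    rcases h with h | h
    · exfalso
      apply mul_ne_zero hx1 hxp1
      rw [← hkey]; exact h
    · rw [hkey, hF.ord_mul _ _ hx1 hxp1] at h; omega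
  have hmin : min (ord (x + 1)) (ord (x - 1)) ≤ (e : ℤ) := by
    have h2 : (x + 1) + (-(x - 1)) = 2 := by ring
    have := hF.min_le_ord_add (x + 1) (-(x - 1)) hxp1 (neg_ne_zero.2 hx1)
      (by rw [h2]; exact two_ne_zero' hF)
    rw [h2, he, ord_neg hF hx1] at this
    exact this
  rcases le_total (ord (x + 1)) (ord (x - 1)) with hc | hc
  · rw [min_eq_left hc] at hmin
    left; right; push_cast; omega
  · rw [min_eq_right hc] at hmin
    right; right; push_cast; omega

theorem unit_coe_mul (a b : (↥O)ˣ) :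
    (((a * b : (↥O)ˣ) : ↥O) : F) = ((a : ↥O) : F) * ((b : ↥O) : F) := by push_cast; rfl

theorem unit_coe_neg (a : (↥O)ˣ) :
    (((-a : (↥O)ˣ) : ↥O) : F) = -(((a : ↥O) : F)) := by push_cast; rfl

/-- the squaring homomorphism. -/
def sqHom (G : Type) [CommGroup G] : G →* G :=
  MonoidHom.mk' (fun g => g * g) (fun a b => by rw [mul_mul_mul_comm])

@[simp] theorem sqHom_apply {G : Type} [CommGroup G] (g : G) : sqHom G g = g * g := rfl

/-- index of the range of an endomorphism of a finite group is the cardinality of its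
kernel. -/
theorem index_range_eq_card_ker {G : Type} [Group G] [Finite G] (φ : G →* G) :
    φ.range.index = Nat.card φ.ker := by
  have h1 := Subgroup.index_mul_card φ.range
  have h2 := Subgroup.card_eq_card_quotient_mul_card_subgroup φ.ker
  have h3 : Nat.card (G ⧸ φ.ker) = Nat.card φ.range :=
    Nat.card_congr (QuotientGroup.quotientKerEquivRange φ).toEquiv
  have hpos : 0 < Nat.card φ.range := Nat.card_pos
  refine Nat.eq_of_mul_eq_mul_right hpos ?_
  rw [h1, h2, h3, Nat.mul_comm]

/-- the subgroup generated by squares and the congruence subgroup is the preimage of the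
squares of the quotient. -/
theorem closure_eq_comap (hF : LocalFieldAxioms O ord 2 q) (f : ℕ) :
    Subgroup.closure ({u : (↥O)ˣ | ∃ v : (↥O)ˣ, u = v * v} ∪
      {u : (↥O)ˣ | ((u : ↥O) : F) - 1 = 0 ∨ (f : ℤ) ≤ ord (((u : ↥O) : F) - 1)}) =
    Subgroup.comap (QuotientGroup.mk' (UU hF f))
      (sqHom ((↥O)ˣ ⧸ UU hF f)).range := by
  apply le_antisymm
  · rw [Subgroup.closure_le]
    rintro u (⟨v, rfl⟩ | hu)
    · refine Subgroup.mem_comap.2 ⟨QuotientGroup.mk' _ v, ?_⟩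
      simp only [sqHom_apply, map_mul]
    · refine Subgroup.mem_comap.2 ?_
      have hker : QuotientGroup.mk' (UU hF f) u = 1 := by
        rw [← MonoidHom.mem_ker, QuotientGroup.ker_mk']
        exact hu
      rw [hker]
      exact Subgroup.one_mem _
  · intro g hg
    rw [Subgroup.mem_comap] at hg
    obtain ⟨x, hx⟩ := hg
    obtain ⟨v, rfl⟩ := QuotientGroup.mk'_surjective (UU hF f) x
    rw [sqHom_apply, ← map_mul] at hx
    rw [QuotientGroup.mk'_eq_mk'] at hx
    obtain ⟨z, hz, hzeq⟩ := hx
    rw [← hzeq]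
    exact mul_mem (Subgroup.subset_closure (Or.inl ⟨v, rfl⟩))
      (Subgroup.subset_closure (Or.inr hz))

/-- the quotient `(↥O)ˣ ⧸ (1 + 𝔭^f)` is finite. -/
theorem finiteG (hF : LocalFieldAxioms O ord 2 q) (f : ℕ) (hf1 : 1 ≤ f) :
    Finite ((↥O)ˣ ⧸ UU hF f) := by
  obtain ⟨π, hπ0, hπ1⟩ := hF.ord_surjective 1
  obtain ⟨S, hScard, hSO, hSrep, hSsep⟩ := hF.residue_card
  have hπO : π ∈ O := (hF.mem_integers π).2 (Or.inr (by rw [hπ1]; norm_num))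
  set yv : (Fin f → ↥S) → F := fun d => ∑ i : Fin f, (d i : F) * π ^ (i : ℕ) with hyv
  have hyvO : ∀ d, yv d ∈ O := fun d =>
    sum_mem fun i _ => mul_mem (hSO _ (d i).2) (pow_mem hπO _)
  set g : (Fin f → ↥S) → ((↥O)ˣ ⧸ UU hF f) := fun d =>
    if h : yv d ≠ 0 ∧ ord (yv d) = 0 then
      QuotientGroup.mk (mkUnit hF (yv d) (hyvO d) h.1 h.2) else 1 with hg
  refine Finite.of_surjective g ?_
  intro gg
  obtain ⟨u, rfl⟩ := QuotientGroup.mk_surjective gg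
  obtain ⟨cd, hcdS, hcd⟩ := digits_exist hF hπ0 hπ1 hSrep f ((u : ↥O) : F) unit_coe_mem
  set d : Fin f → ↥S := fun i => ⟨cd i, hcdS i⟩ with hd
  have hyd : yv d = ∑ i : Fin f, cd i * π ^ (i : ℕ) := rfl
  have hV : Vp ord f (((u : ↥O) : F) - yv d) := by rw [hyd]; exact hcd
  have hyprop : yv d ≠ 0 ∧ ord (yv d) = 0 := by
    have hkey : yv d = ((u : ↥O) : F) + (-(((u : ↥O) : F) - yv d)) := by ring
    have h2 : Vp ord (ord ((u : ↥O) : F) + 1) (-(((u : ↥O) : F) - yv d)) := by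
      refine (Vp.neg hF hV).mono ?_
      rw [unit_ord_zero hF u]
      push_cast; omega
    have := ord_add_of_lt hF (unit_coe_ne_zero (u := u)) h2
    rw [← hkey, unit_ord_zero hF u] at this
    exact this
  refine ⟨d, ?_⟩
  rw [hg]
  simp only [dif_pos hyprop]
  rw [class_eq_iff hF]
  rw [mkUnit_coe]
  have := Vp.neg hF hV
  rwa [neg_sub] at this

/-- digit expansion of a unit congruent to `1` mod `𝔭^m`. -/
theorem expand_class (hF : LocalFieldAxioms O ord 2 q) {π : F} (hπ0 : π ≠ 0)
    (hπ1 : ord π = 1) {S : Finset F} (hSrep : ∀ x : F, x ∈ O → ∃ y ∈ S,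
      x - y = 0 ∨ 1 ≤ ord (x - y))
    {m k : ℕ} (u : (↥O)ˣ) (hu : Vp ord m (((u : ↥O) : F) - 1)) :
    ∃ c : Fin k → F, (∀ i, c i ∈ S) ∧
      Vp ord ((m + k : ℕ)) (((u : ↥O) : F) - (1 + ∑ i : Fin k, c i * π ^ (m + (i : ℕ)))) := by
  set xu := ((u : ↥O) : F) with hxu
  have hπm : π ^ m ≠ 0 := pow_ne_zero _ hπ0
  set x := (xu - 1) * (π ^ m)⁻¹ with hx
  have hxm : xu - 1 = π ^ m * x := by rw [hx]; field_simp
  have hxO : x ∈ O := by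
    rw [mem_O_iff_Vp hF]
    rcases hu with h | h
    · left; rw [hx, h, zero_mul]
    · by_cases h0 : xu - 1 = 0
      · left; rw [hx, h0, zero_mul]
      · right
        rw [hx, hF.ord_mul _ _ h0 (inv_ne_zero hπm), ord_inv hF hπm,
          ord_pow hF hπ0, hπ1]
        omega
  obtain ⟨c, hcS, hc⟩ := digits_exist hF hπ0 hπ1 hSrep k x hxO
  refine ⟨c, hcS, ?_⟩
  have key : xu - (1 + ∑ i : Fin k, c i * π ^ (m + (i : ℕ)))
      = π ^ m * (x - ∑ i : Fin k, c i * π ^ (i : ℕ)) := by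
    rw [mul_sub, ← hxm, Finset.mul_sum]
    have : ∀ i : Fin k, π ^ m * (c i * π ^ (i : ℕ)) = c i * π ^ (m + (i : ℕ)) := by
      intro i; rw [pow_add]; ring
    rw [Finset.sum_congr rfl fun i _ => this i]
    ring
  rw [key]
  have hπmV : Vp ord m (π ^ m) := Or.inr (le_of_eq (by rw [ord_pow hF hπ0, hπ1]; ring))
  have := Vp.mul hF hπmV hc
  refine this.mono (le_of_eq ?_)
  push_cast; ring

theorem card_ker_easy (hF : LocalFieldAxioms O ord 2 q) {e f : ℕ} (he : ord (2 : F) = e)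
    (hf1 : 1 ≤ f) (hf2 : f ≤ 2 * e) :
    Nat.card ((sqHom ((↥O)ˣ ⧸ UU hF f)).ker) = q ^ (f / 2) := by
  obtain ⟨π, hπ0, hπ1⟩ := hF.ord_surjective 1
  obtain ⟨S, hScard, hSO, hSrep, hSsep⟩ := hF.residue_card
  have hπO : π ∈ O := (hF.mem_integers π).2 (Or.inr (by rw [hπ1]; norm_num))
  set c : ℕ := (f + 1) / 2 with hcdef
  have hc1 : 1 ≤ c := by omega
  have hcf : c ≤ f := by omega
  set k := f - c with hk
  have hkc : c + k = f := by omega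
  set y : (Fin k → ↥S) → F := fun d => 1 + ∑ i : Fin k, ((d i : F)) * π ^ (c + (i : ℕ))
    with hy
  have hsumV : ∀ d : Fin k → ↥S, Vp ord c (y d - 1) := by
    intro d
    have hh : y d - 1 = ∑ i : Fin k, ((d i : F)) * π ^ (c + (i : ℕ)) := by rw [hy]; ring
    rw [hh]
    refine Vp.sum hF _ _ ?_
    intro i _
    have h1 : Vp ord 0 ((d i : F)) := (mem_O_iff_Vp hF).1 (hSO _ (d i).2)
    have h2 : Vp ord ((c + (i : ℕ) : ℕ)) (π ^ (c + (i : ℕ))) :=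
      Or.inr (le_of_eq (by rw [ord_pow hF hπ0, hπ1]; push_cast; ring))
    exact (Vp.mul hF h1 h2).mono (by push_cast; omega)
  have hyO : ∀ d, y d ∈ O := fun d =>
    add_mem (one_mem O) (sum_mem fun i _ => mul_mem (hSO _ (d i).2) (pow_mem hπO _))
  have hyprops : ∀ d, y d ≠ 0 ∧ ord (y d) = 0 := by
    intro d
    have h2 : Vp ord (ord (1 : F) + 1) (y d - 1) := by
      refine (hsumV d).mono ?_
      rw [ord_one hF]
      push_cast; omega
    have h3 := ord_add_of_lt hF (one_ne_zero : (1 : F) ≠ 0) h2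
    rw [add_sub_cancel, ord_one hF] at h3
    exact h3
  set U : (Fin k → ↥S) → (↥O)ˣ := fun d =>
    mkUnit hF (y d) (hyO d) (hyprops d).1 (hyprops d).2 with hU
  have hUcoe : ∀ d, (((U d : (↥O)ˣ) : ↥O) : F) = y d := fun d => rfl
  have hker : ∀ d, (QuotientGroup.mk (U d) : (↥O)ˣ ⧸ UU hF f) ∈ (sqHom _).ker := by
    intro d
    rw [MonoidHom.mem_ker, sqHom_apply, ← QuotientGroup.mk_mul,
      QuotientGroup.eq_one_iff]
    rw [mem_UU_iff hF, unit_coe_mul, hUcoe]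
    exact sq_easy hF he hf2 (hsumV d)
  set Φ : (Fin k → ↥S) → ↥((sqHom ((↥O)ˣ ⧸ UU hF f)).ker) := fun d =>
    ⟨QuotientGroup.mk (U d), hker d⟩ with hΦ
  have hbij : Function.Bijective Φ := by
    constructor
    · intro d d' hdd
      have h1 : (QuotientGroup.mk (U d) : (↥O)ˣ ⧸ UU hF f) = QuotientGroup.mk (U d') :=
        congrArg Subtype.val hdd
      rw [class_eq_iff hF, hUcoe, hUcoe] at h1
      have h2 : Vp ord f (∑ i : Fin k, ((d' i : F)) * π ^ (c + (i : ℕ)) -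
          ∑ i : Fin k, ((d i : F)) * π ^ (c + (i : ℕ))) := by
        have hh : y d' - y d = ∑ i : Fin k, ((d' i : F)) * π ^ (c + (i : ℕ)) -
            ∑ i : Fin k, ((d i : F)) * π ^ (c + (i : ℕ)) := by rw [hy]; ring
        rwa [hh] at h1
      have h3 := digits_inj hF hπ0 hπ1 hSO hSsep (le_of_eq hkc)
        (fun i => (d' i : F)) (fun i => (d i : F)) (fun i => (d' i).2)
        (fun i => (d i).2) h2
      funext i
      exact Subtype.ext (congrFun h3 i).symm
    · rintro ⟨g, hg⟩
      obtain ⟨u, rfl⟩ := QuotientGroup.mk_surjective g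
      rw [MonoidHom.mem_ker, sqHom_apply, ← QuotientGroup.mk_mul,
        QuotientGroup.eq_one_iff, mem_UU_iff hF, unit_coe_mul] at hg
      have hu : Vp ord c (((u : ↥O) : F) - 1) := by
        rw [hcdef]
        exact ker_easy hF he hf1 hf2 (unit_coe_ne_zero (u := u)) unit_coe_mem hg
      obtain ⟨cd, hcdS, hcd⟩ := expand_class hF hπ0 hπ1 hSrep (m := c) (k := k) u hu
      set d : Fin k → ↥S := fun i => ⟨cd i, hcdS i⟩ with hd
      refine ⟨d, ?_⟩
      apply Subtype.ext
      show (QuotientGroup.mk (U d) : (↥O)ˣ ⧸ UU hF f) = QuotientGroup.mk u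
      rw [class_eq_iff hF, hUcoe]
      have hyd : y d = 1 + ∑ i : Fin k, cd i * π ^ (c + (i : ℕ)) := rfl
      rw [hyd]
      rw [hkc] at hcd
      exact hcd
  have hcard := (Nat.card_eq_of_bijective Φ hbij).symm
  rw [hcard]
  have : Nat.card (Fin k → ↥S) = S.card ^ k := by
    simp [Nat.card_eq_fintype_card]
  rw [this, hScard]
  congr 1
  omega

theorem card_ker_hard (hF : LocalFieldAxioms O ord 2 q) {e f : ℕ} (he : ord (2 : F) = e)
    (hf : 2 * e < f) :
    Nat.card ((sqHom ((↥O)ˣ ⧸ UU hF f)).ker) = 2 * q ^ e := by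
  obtain ⟨π, hπ0, hπ1⟩ := hF.ord_surjective 1
  obtain ⟨S, hScard, hSO, hSrep, hSsep⟩ := hF.residue_card
  have hπO : π ∈ O := (hF.mem_integers π).2 (Or.inr (by rw [hπ1]; norm_num))
  have he1 : 1 ≤ e := by
    have := ord_two_pos hF
    omega
  set m : ℕ := f - e with hmdef
  have hm1 : 1 ≤ m := by omega
  have hem : (e : ℤ) < m := by push_cast; omega
  set k := e with hk
  have hkc : m + k = f := by omega
  set y : (Fin k → ↥S) → F := fun d => 1 + ∑ i : Fin k, ((d i : F)) * π ^ (m + (i : ℕ))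
    with hy
  have hsumV : ∀ d : Fin k → ↥S, Vp ord m (y d - 1) := by
    intro d
    have hh : y d - 1 = ∑ i : Fin k, ((d i : F)) * π ^ (m + (i : ℕ)) := by rw [hy]; ring
    rw [hh]
    refine Vp.sum hF _ _ ?_
    intro i _
    have h1 : Vp ord 0 ((d i : F)) := (mem_O_iff_Vp hF).1 (hSO _ (d i).2)
    have h2 : Vp ord ((m + (i : ℕ) : ℕ)) (π ^ (m + (i : ℕ))) :=
      Or.inr (le_of_eq (by rw [ord_pow hF hπ0, hπ1]; push_cast; ring))
    exact (Vp.mul hF h1 h2).mono (by push_cast; omega)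
  have hyO : ∀ d, y d ∈ O := fun d =>
    add_mem (one_mem O) (sum_mem fun i _ => mul_mem (hSO _ (d i).2) (pow_mem hπO _))
  have hyprops : ∀ d, y d ≠ 0 ∧ ord (y d) = 0 := by
    intro d
    have h2 : Vp ord (ord (1 : F) + 1) (y d - 1) := by
      refine (hsumV d).mono ?_
      rw [ord_one hF]
      push_cast; omega
    have h3 := ord_add_of_lt hF (one_ne_zero : (1 : F) ≠ 0) h2
    rw [add_sub_cancel, ord_one hF] at h3
    exact h3
  set U : (Fin k → ↥S) → (↥O)ˣ := fun d =>
    mkUnit hF (y d) (hyO d) (hyprops d).1 (hyprops d).2 with hU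
  have hUcoe : ∀ d, (((U d : (↥O)ˣ) : ↥O) : F) = y d := fun d => rfl
  -- no mixing of the two signs
  have hnomix : ∀ d d' : Fin k → ↥S, ¬ Vp ord f (-(y d') - y d) := by
    intro d d' hcon
    have h2 : Vp ord m (2 : F) := by
      have hkey : (2 : F) = -((-(y d') - y d)) + -(y d - 1) + -(y d' - 1) := by ring
      rw [hkey]
      refine Vp.add hF (Vp.add hF ?_ ?_) ?_
      · exact (Vp.neg hF hcon).mono (by push_cast; omega)
      · exact Vp.neg hF (hsumV d)
      · exact Vp.neg hF (hsumV d')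
    rcases h2 with h2 | h2
    · exact two_ne_zero' hF h2
    · rw [he] at h2; omega
  -- the bijection
  have hker : ∀ (ε : Bool) (d : Fin k → ↥S),
      (QuotientGroup.mk (if ε then U d else -(U d)) : (↥O)ˣ ⧸ UU hF f) ∈
        (sqHom _).ker := by
    intro ε d
    rw [MonoidHom.mem_ker, sqHom_apply, ← QuotientGroup.mk_mul,
      QuotientGroup.eq_one_iff, mem_UU_iff hF, unit_coe_mul]
    have hsq : Vp ord f (y d * y d - 1) := sq_hard hF he hf (hsumV d)
    cases ε
    · simp only [Bool.false_eq_true, if_false, unit_coe_neg, hUcoe]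
      have hkey : -(y d) * -(y d) - 1 = y d * y d - 1 := by ring
      rw [hkey]; exact hsq
    · simp only [if_true, hUcoe]; exact hsq
  set Φ : Bool × (Fin k → ↥S) → ↥((sqHom ((↥O)ˣ ⧸ UU hF f)).ker) := fun p =>
    ⟨QuotientGroup.mk (if p.1 then U p.2 else -(U p.2)), hker p.1 p.2⟩ with hΦ
  have hinj_same : ∀ d d' : Fin k → ↥S, Vp ord f (y d' - y d) → d = d' := by
    intro d d' h1
    have h2 : Vp ord f (∑ i : Fin k, ((d' i : F)) * π ^ (m + (i : ℕ)) -
        ∑ i : Fin k, ((d i : F)) * π ^ (m + (i : ℕ))) := by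
      have hh : y d' - y d = ∑ i : Fin k, ((d' i : F)) * π ^ (m + (i : ℕ)) -
          ∑ i : Fin k, ((d i : F)) * π ^ (m + (i : ℕ)) := by rw [hy]; ring
      rwa [hh] at h1
    have h3 := digits_inj hF hπ0 hπ1 hSO hSsep (le_of_eq hkc)
      (fun i => (d' i : F)) (fun i => (d i : F)) (fun i => (d' i).2)
      (fun i => (d i).2) h2
    funext i
    exact Subtype.ext (congrFun h3 i).symm
  have hbij : Function.Bijective Φ := by
    constructor
    · rintro ⟨ε, d⟩ ⟨ε', d'⟩ hdd
      have h1 : (QuotientGroup.mk (if ε then U d else -(U d)) : (↥O)ˣ ⧸ UU hF f) =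
          QuotientGroup.mk (if ε' then U d' else -(U d')) := congrArg Subtype.val hdd
      rw [class_eq_iff hF] at h1
      cases ε <;> cases ε' <;>
        simp only [if_true, if_false, Bool.false_eq_true, unit_coe_neg, hUcoe] at h1
      · -- both negative : -(y d') - (-(y d)) = y d - y d'
        have hkey : -(y d') - -(y d) = y d - y d' := by ring
        rw [hkey] at h1
        rw [hinj_same d' d h1]
      · -- ε = false, ε' = true : y d' - (-(y d))
        exfalso
        apply hnomix d' d
        have hkey : -(y d) - y d' = -(y d' - - (y d)) := by ring
        rw [hkey]
        exact Vp.neg hF h1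
      · exfalso
        exact hnomix d d' h1
      · rw [hinj_same d d' h1]
    · rintro ⟨g, hg⟩
      obtain ⟨u, rfl⟩ := QuotientGroup.mk_surjective g
      rw [MonoidHom.mem_ker, sqHom_apply, ← QuotientGroup.mk_mul,
        QuotientGroup.eq_one_iff, mem_UU_iff hF, unit_coe_mul] at hg
      have hker2 := ker_hard hF he hf (unit_coe_ne_zero (u := u)) unit_coe_mem hg
      rcases hker2 with hpos | hneg
      · -- u ≡ 1
        obtain ⟨cd, hcdS, hcd⟩ := expand_class hF hπ0 hπ1 hSrep (m := m) (k := k) u hpos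
        set d : Fin k → ↥S := fun i => ⟨cd i, hcdS i⟩ with hd
        refine ⟨(true, d), ?_⟩
        apply Subtype.ext
        show (QuotientGroup.mk (if true then U d else -(U d)) : (↥O)ˣ ⧸ UU hF f) =
          QuotientGroup.mk u
        rw [if_pos rfl, class_eq_iff hF, hUcoe]
        have hyd : y d = 1 + ∑ i : Fin k, cd i * π ^ (m + (i : ℕ)) := rfl
        rw [hkc] at hcd
        rw [hyd]
        exact hcd
      · -- u ≡ -1
        have hneg' : Vp ord m ((((-u : (↥O)ˣ) : ↥O) : F) - 1) := by
          rw [unit_coe_neg]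
          have hkey : -((u : ↥O) : F) - 1 = -(((u : ↥O) : F) + 1) := by ring
          rw [hkey]
          exact Vp.neg hF hneg
        obtain ⟨cd, hcdS, hcd⟩ := expand_class hF hπ0 hπ1 hSrep (m := m) (k := k)
          (-u) hneg'
        set d : Fin k → ↥S := fun i => ⟨cd i, hcdS i⟩ with hd
        refine ⟨(false, d), ?_⟩
        apply Subtype.ext
        show (QuotientGroup.mk (if false then U d else -(U d)) : (↥O)ˣ ⧸ UU hF f) =
          QuotientGroup.mk u
        have h1 : (QuotientGroup.mk (U d) : (↥O)ˣ ⧸ UU hF f) = QuotientGroup.mk (-u) := by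
          rw [class_eq_iff hF, hUcoe]
          have hyd : y d = 1 + ∑ i : Fin k, cd i * π ^ (m + (i : ℕ)) := rfl
          rw [hkc] at hcd
          rw [hyd]
          exact hcd
        have h2 := congrArg (fun z => (QuotientGroup.mk (-1 : (↥O)ˣ) : (↥O)ˣ ⧸ UU hF f) * z) h1
        simp only [← QuotientGroup.mk_mul] at h2
        have e1 : (-1 : (↥O)ˣ) * U d = -(U d) := by rw [neg_one_mul]
        have e2 : (-1 : (↥O)ˣ) * -u = u := by rw [neg_one_mul, neg_neg]
        rw [e1, e2] at h2
        simpa using h2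
  have hcard := (Nat.card_eq_of_bijective Φ hbij).symm
  rw [hcard]
  have : Nat.card (Bool × (Fin k → ↥S)) = 2 * S.card ^ k := by
    simp [Nat.card_eq_fintype_card]
  rw [this, hScard]

end Aux12

/-- The index `[𝔬^× : 𝔬^{×2}(1+𝔭^f)]` over a finite extension of `ℚ₂`
with ramification index `e`. -/
theorem statement12 {F : Type} [Field F] (O : Subring F) (ord : F → ℤ) (q e : ℕ)
    (hF : LocalFieldAxioms O ord 2 q) (he : ord (2 : F) = e)
    (f : ℕ) :
    (0 < f → f ≤ 2 * e →
      (Subgroup.closure ({u : (↥O)ˣ | ∃ v : (↥O)ˣ, u = v * v} ∪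
        {u : (↥O)ˣ | ((u : ↥O) : F) - 1 = 0 ∨ (f : ℤ) ≤ ord (((u : ↥O) : F) - 1)})).index
        = q ^ (f / 2)) ∧
    (2 * e < f →
      (Subgroup.closure ({u : (↥O)ˣ | ∃ v : (↥O)ˣ, u = v * v} ∪
        {u : (↥O)ˣ | ((u : ↥O) : F) - 1 = 0 ∨ (f : ℤ) ≤ ord (((u : ↥O) : F) - 1)})).index
        = 2 * q ^ e) := by
  have he1 : 1 ≤ e := by
    have h1 := ord_two_pos hF
    rw [he] at h1
    exact_mod_cast h1
  constructor
  · intro hf1 hf2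
    haveI := finiteG hF f hf1
    rw [closure_eq_comap hF f,
      Subgroup.index_comap_of_surjective _ (QuotientGroup.mk'_surjective _),
      index_range_eq_card_ker]
    exact card_ker_easy hF he hf1 hf2
  · intro hf
    haveI := finiteG hF f (by omega)
    rw [closure_eq_comap hF f,
      Subgroup.index_comap_of_surjective _ (QuotientGroup.mk'_surjective _),
      index_range_eq_card_ker]
    exact card_ker_hard hF he hf


end GK
end
end
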